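/- arXiv:1607.00658 — 9 statements merged into one kernel-verified Lean document; each statement's English description precedes it below -/
import Mathlib

section
/- For every negative integer c₁ and positive integer c₂, there exist connected graphs G₁, G₂ with non-cut edges e₁ ∈ E(G₁), e₂ ∈ E(G₂) such that Z_c(G₁) - Z_c(G₁ - e₁) < c₁ and Z_c(G₂) - Z_c(G₂ - e₂) > c₂. -/
/-- A vertex is (eventually) forced, starting from the initially colored set `S`,
under the zero forcing color change rule: a colored vertex all of whose other
neighbors are colored forces its remaining neighbor. -/
inductive SimpleGraph.Forced {V : Type*} (G : SimpleGraph V) (S : Set V) : V → Prop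
  | init (v : V) (hv : v ∈ S) : SimpleGraph.Forced G S v
  | force (u v : V) (hu : SimpleGraph.Forced G S u) (huv : G.Adj u v)
      (hrest : ∀ w, G.Adj u w → w ≠ v → SimpleGraph.Forced G S w) :
      SimpleGraph.Forced G S v

/-- `S` is a zero forcing set of `G`. -/
def SimpleGraph.IsZeroForcingSet {V : Type*} (G : SimpleGraph V) (S : Set V) : Prop :=
  ∀ v, G.Forced S v

/-- `S` is a connected zero forcing set of `G`. -/
def SimpleGraph.IsConnectedZFS {V : Type*} (G : SimpleGraph V) (S : Set V) : Prop :=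
  G.IsZeroForcingSet S ∧ (G.induce S).Connected

/-- The zero forcing number `Z(G)`. -/
noncomputable def SimpleGraph.zfNumber {V : Type*} (G : SimpleGraph V) : ℕ :=
  sInf {n | ∃ S : Set V, G.IsZeroForcingSet S ∧ S.ncard = n}

/-- The connected zero forcing number `Z_c(G)`. -/
noncomputable def SimpleGraph.czfNumber {V : Type*} (G : SimpleGraph V) : ℕ :=
  sInf {n | ∃ S : Set V, G.IsConnectedZFS S ∧ S.ncard = n}

/-- `P` is (the vertex set of) a connected component of `G − X`. -/
def SimpleGraph.IsCompOfDel {V : Type*} (G : SimpleGraph V) (X P : Set V) : Prop :=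
  P.Nonempty ∧ Disjoint P X ∧ (G.induce P).Connected ∧
    ∀ u ∈ P, ∀ w, G.Adj u w → w ∉ X → w ∈ P

/-- The induced subgraph `G[P]` is a path graph. -/
def SimpleGraph.IsPathGraphOn {V : Type*} (G : SimpleGraph V) (P : Set V) : Prop :=
  P.Nonempty ∧ (G.induce P).Connected ∧
    (∀ v ∈ P, (G.neighborSet v ∩ P).ncard ≤ 2) ∧
    ∃ v ∈ P, (G.neighborSet v ∩ P).ncard ≤ 1

/-- `P` is a pendant path attached to `v`: a path component of `G − v`,
one of whose ends (a base) is adjacent to `v`. -/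
def SimpleGraph.IsPendantPath {V : Type*} (G : SimpleGraph V) (v : V) (P : Set V) : Prop :=
  G.IsCompOfDel {v} P ∧ G.IsPathGraphOn P ∧
    ∃ b ∈ P, G.Adj v b ∧ (G.neighborSet b ∩ P).ncard ≤ 1

/-- `v` is a cut vertex of `G`. -/
def SimpleGraph.IsCutVertex {V : Type*} (G : SimpleGraph V) (v : V) : Prop :=
  ¬ (G.induce {v}ᶜ).Connected

/-- `G[B]` is connected and has no cut vertices. -/
def SimpleGraph.IsBiconnectedSet {V : Type*} (G : SimpleGraph V) (B : Set V) : Prop :=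
  (G.induce B).Connected ∧
    ∀ v ∈ B, (B \ {v}).Nonempty → (G.induce (B \ {v})).Connected

/-- `B` is (the vertex set of) a block of `G`: a maximal subgraph with no cut vertices. -/
def SimpleGraph.IsBlock {V : Type*} (G : SimpleGraph V) (B : Set V) : Prop :=
  G.IsBiconnectedSet B ∧ ∀ B', B ⊆ B' → G.IsBiconnectedSet B' → B' = B

/-- The induced subgraph `G[C]` is a cycle. -/
def SimpleGraph.IsCycleGraphOn {V : Type*} (G : SimpleGraph V) (C : Set V) : Prop :=
  3 ≤ C.ncard ∧ (G.induce C).Connected ∧ ∀ v ∈ C, (G.neighborSet v ∩ C).ncard = 2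

/-- `D` is a (possibly empty) segment of the cycle `G[C]`:
a proper set of consecutive vertices along the cycle. -/
def SimpleGraph.IsSegmentOf {V : Type*} (G : SimpleGraph V) (C D : Set V) : Prop :=
  D ⊆ C ∧ (D = ∅ ∨ ((G.induce D).Connected ∧ D ≠ C))

/-- The minimum degree of the induced subgraph `G[B]`. -/
noncomputable def SimpleGraph.minDegOn {V : Type*} (G : SimpleGraph V) (B : Set V) : ℕ :=
  sInf ((fun v => (G.neighborSet v ∩ B).ncard) '' B)

/-- `G − v` has at least three connected components. -/
def SimpleGraph.DelHasThreeComps {V : Type*} (G : SimpleGraph V) (v : V) : Prop :=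
  ∃ P₁ P₂ P₃ : Set V, G.IsCompOfDel {v} P₁ ∧ G.IsCompOfDel {v} P₂ ∧ G.IsCompOfDel {v} P₃ ∧
    Disjoint P₁ P₂ ∧ Disjoint P₁ P₃ ∧ Disjoint P₂ P₃

/-- `G − v` has exactly two connected components. -/
def SimpleGraph.DelHasTwoComps {V : Type*} (G : SimpleGraph V) (v : V) : Prop :=
  ∃ P₁ P₂ : Set V, G.IsCompOfDel {v} P₁ ∧ G.IsCompOfDel {v} P₂ ∧
    Disjoint P₁ P₂ ∧ P₁ ∪ P₂ = {v}ᶜ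


namespace ZCF

open SimpleGraph


/-! ### The graph family -/

abbrev F (N : ℕ) := Fin (N + 5)

/-- Arithmetic adjacency relation: path `0—1—⋯—N`, plus `0—(N+2)` always,
`0—(N+1)` if `xp`, `N—(N+3)`, `N—(N+4)`, plus extra edges `E`. -/
def arel (N : ℕ) (xp : Prop) (E : ℕ → ℕ → Prop) (a b : ℕ) : Prop :=
  (a + 1 = b ∧ b ≤ N) ∨ (a = 0 ∧ (b = N + 2 ∨ (b = N + 1 ∧ xp))) ∨
    (a = N ∧ (b = N + 3 ∨ b = N + 4)) ∨ E a b

def gr (N : ℕ) (xp : Prop) (E : ℕ → ℕ → Prop) : SimpleGraph (F N) :=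
  SimpleGraph.fromRel (fun u v => arel N xp E u.val v.val)

variable {N : ℕ}

lemma adj_iff {xp : Prop} {E : ℕ → ℕ → Prop} {u v : F N} :
    (gr N xp E).Adj u v ↔
      u.val ≠ v.val ∧ (arel N xp E u.val v.val ∨ arel N xp E v.val u.val) := by
  rw [gr, SimpleGraph.fromRel_adj]
  constructor
  · rintro ⟨h1, h2⟩; exact ⟨fun h => h1 (Fin.ext h), h2⟩
  · rintro ⟨h1, h2⟩; exact ⟨fun h => h1 (congrArg Fin.val h), h2⟩

lemma adj_mk1 {xp : Prop} {E : ℕ → ℕ → Prop} {u v : F N} (hne : u.val ≠ v.val)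
    (h : arel N xp E u.val v.val) : (gr N xp E).Adj u v := adj_iff.mpr ⟨hne, Or.inl h⟩

lemma adj_mk2 {xp : Prop} {E : ℕ → ℕ → Prop} {u v : F N} (hne : u.val ≠ v.val)
    (h : arel N xp E v.val u.val) : (gr N xp E).Adj u v := adj_iff.mpr ⟨hne, Or.inr h⟩


lemma mk_eq_iff {a : ℕ} {h1 : a < N + 5} {v : F N} :
    (⟨a, h1⟩ : F N) = v ↔ a = v.val :=
  ⟨fun hh => congrArg Fin.val hh, fun hh => Fin.ext hh⟩

lemma eq_mk_iff {a : ℕ} {h1 : a < N + 5} {v : F N} :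
    v = (⟨a, h1⟩ : F N) ↔ v.val = a :=
  ⟨fun hh => congrArg Fin.val hh, fun hh => Fin.ext hh⟩

/-- hypothesis: extra edges lie inside `{N+1,N+2}` or `{N+3,N+4}`. -/
def EOK (N : ℕ) (E : ℕ → ℕ → Prop) : Prop :=
  ∀ a b, E a b → (a = N + 1 ∧ b = N + 2) ∨ (a = N + 3 ∧ b = N + 4)

/-- Demand lemma, left end: if neither `N+1` (p) nor `N+2` (q) is initially colored,
they can never be forced. -/
lemma demandL {xp : Prop} {E : ℕ → ℕ → Prop} (hE : EOK N E) (hxp : xp) {S : Set (F N)}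
    (hp : (⟨N + 1, by omega⟩ : F N) ∉ S) (hq : (⟨N + 2, by omega⟩ : F N) ∉ S)
    {v : F N} (hv : (gr N xp E).Forced S v) : v.val ≠ N + 1 ∧ v.val ≠ N + 2 := by
  induction hv with
  | init v hv =>
    constructor <;> intro h <;> [exact hp (by rwa [(eq_mk_iff.mpr h : v = _)] at hv);
      exact hq (by rwa [(eq_mk_iff.mpr h : v = _)] at hv)]
  | force u v hu huv hrest ihu ihrest =>
    have hu5 := u.isLt
    have hv5 := v.isLt
    obtain ⟨hne, h | h⟩ := adj_iff.mp huv
    · constructor <;> intro hval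
      · rcases h with ⟨h1, h2⟩ | ⟨h1, h2⟩ | ⟨h1, h2⟩ | h
        · omega
        · -- u = x₀, v = p : then q must be forced, contradiction
          rcases h2 with h2 | ⟨h2, -⟩
          · omega
          · have hadj : (gr N xp E).Adj u ⟨N + 2, by omega⟩ :=
              adj_mk1 (show u.val ≠ N + 2 by omega) (Or.inr (Or.inl ⟨h1, Or.inl rfl⟩))
            have := ihrest ⟨N + 2, by omega⟩ hadj
              (by intro hh; have := mk_eq_iff.mp hh; omega)
            exact this.2 rfl
        · omega
        · rcases hE _ _ h with ⟨h1, h2⟩ | ⟨h1, h2⟩ <;> [exact ihu.1 h1; omega]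
      · rcases h with ⟨h1, h2⟩ | ⟨h1, h2⟩ | ⟨h1, h2⟩ | h
        · omega
        · -- u = x₀, v = q : then p must be forced
          have hadj : (gr N xp E).Adj u ⟨N + 1, by omega⟩ :=
            adj_mk1 (show u.val ≠ N + 1 by omega) (Or.inr (Or.inl ⟨h1, Or.inr ⟨rfl, hxp⟩⟩))
          have := ihrest ⟨N + 1, by omega⟩ hadj
            (by intro hh; have := mk_eq_iff.mp hh; omega)
          exact this.1 rfl
        · omega
        · rcases hE _ _ h with ⟨h1, h2⟩ | ⟨h1, h2⟩ <;> [exact ihu.1 h1; omega]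
    · constructor <;> intro hval
      · rcases h with ⟨h1, h2⟩ | ⟨h1, h2⟩ | ⟨h1, h2⟩ | h
        · omega
        · omega
        · omega
        · rcases hE _ _ h with ⟨h1, h2⟩ | ⟨h1, h2⟩ <;> [exact ihu.2 h2; omega]
      · rcases h with ⟨h1, h2⟩ | ⟨h1, h2⟩ | ⟨h1, h2⟩ | h
        · omega
        · omega
        · omega
        · rcases hE _ _ h with ⟨h1, h2⟩ | ⟨h1, h2⟩ <;> omega

/-- Demand lemma, right end. -/
lemma demandR {xp : Prop} {E : ℕ → ℕ → Prop} (hE : EOK N E) {S : Set (F N)}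
    (hr : (⟨N + 3, by omega⟩ : F N) ∉ S) (hs : (⟨N + 4, by omega⟩ : F N) ∉ S)
    {v : F N} (hv : (gr N xp E).Forced S v) : v.val ≠ N + 3 ∧ v.val ≠ N + 4 := by
  induction hv with
  | init v hv =>
    constructor <;> intro h <;> [exact hr (by rwa [(eq_mk_iff.mpr h : v = _)] at hv);
      exact hs (by rwa [(eq_mk_iff.mpr h : v = _)] at hv)]
  | force u v hu huv hrest ihu ihrest =>
    have hu5 := u.isLt
    have hv5 := v.isLt
    obtain ⟨hne, h | h⟩ := adj_iff.mp huv
    · constructor <;> intro hval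
      · rcases h with ⟨h1, h2⟩ | ⟨h1, h2⟩ | ⟨h1, h2⟩ | h
        · omega
        · omega
        · -- u = x_N, v = r : then s must be forced
          have hadj : (gr N xp E).Adj u ⟨N + 4, by omega⟩ :=
            adj_mk1 (show u.val ≠ N + 4 by omega) (Or.inr (Or.inr (Or.inl ⟨h1, Or.inr rfl⟩)))
          have := ihrest ⟨N + 4, by omega⟩ hadj
            (by intro hh; have := mk_eq_iff.mp hh; omega)
          exact this.2 rfl
        · rcases hE _ _ h with ⟨h1, h2⟩ | ⟨h1, h2⟩ <;> [omega; exact ihu.1 h1]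
      · rcases h with ⟨h1, h2⟩ | ⟨h1, h2⟩ | ⟨h1, h2⟩ | h
        · omega
        · omega
        · -- u = x_N, v = s : then r must be forced
          have hadj : (gr N xp E).Adj u ⟨N + 3, by omega⟩ :=
            adj_mk1 (show u.val ≠ N + 3 by omega) (Or.inr (Or.inr (Or.inl ⟨h1, Or.inl rfl⟩)))
          have := ihrest ⟨N + 3, by omega⟩ hadj
            (by intro hh; have := mk_eq_iff.mp hh; omega)
          exact this.1 rfl
        · rcases hE _ _ h with ⟨h1, h2⟩ | ⟨h1, h2⟩ <;> [omega; exact ihu.1 h1]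
    · constructor <;> intro hval
      · rcases h with ⟨h1, h2⟩ | ⟨h1, h2⟩ | ⟨h1, h2⟩ | h
        · omega
        · omega
        · omega
        · rcases hE _ _ h with ⟨h1, h2⟩ | ⟨h1, h2⟩ <;> [omega; exact ihu.2 h2]
      · rcases h with ⟨h1, h2⟩ | ⟨h1, h2⟩ | ⟨h1, h2⟩ | h
        · omega
        · omega
        · omega
        · rcases hE _ _ h with ⟨h1, h2⟩ | ⟨h1, h2⟩ <;> omega


/-! ### Height function and intermediate value along walks -/

def ht (N : ℕ) (v : F N) : ℕ :=
  if v.val ≤ N then v.val else if v.val ≤ N + 2 then 0 else N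

lemma ht_step {xp : Prop} {E : ℕ → ℕ → Prop} (hE : EOK N E) {u v : F N}
    (h : (gr N xp E).Adj u v) : ht N v ≤ ht N u + 1 := by
  have hu5 := u.isLt
  have hv5 := v.isLt
  obtain ⟨hne, h | h⟩ := adj_iff.mp h <;>
    rcases h with ⟨h1, h2⟩ | ⟨h1, h2⟩ | ⟨h1, h2⟩ | h <;>
      first
        | (simp only [ht]; split_ifs <;> omega)
        | (rcases hE _ _ h with ⟨h1, h2⟩ | ⟨h1, h2⟩ <;> (simp only [ht]; split_ifs <;> omega))

lemma walk_iv {xp : Prop} {E : ℕ → ℕ → Prop} (hE : EOK N E) {S : Set (F N)} :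
    ∀ {u v : ↥S} (_ : ((gr N xp E).induce S).Walk u v) (i : ℕ),
      ht N u.val ≤ i → i ≤ ht N v.val → ∃ w ∈ S, ht N w = i := by
  intro u v W
  induction W with
  | @nil u0 => exact fun i h1 h2 => ⟨u0.val, u0.2, by omega⟩
  | @cons a b c hab W ih =>
    intro i h1 h2
    by_cases hc : ht N a.val = i
    · exact ⟨_, a.2, hc⟩
    · have hadj : (gr N xp E).Adj a.val b.val := hab
      have hstep := ht_step hE hadj
      exact ih i (by omega) h2

/-! ### Connectivity -/

lemma reach_x0 {xp : Prop} {E : ℕ → ℕ → Prop} :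
    ∀ m (hm : m ≤ N), (gr N xp E).Reachable ⟨m, by omega⟩ ⟨0, by omega⟩ := by
  intro m
  induction m with
  | zero => exact fun _ => Reachable.refl _
  | succ k ih =>
    intro hm
    have hadj : (gr N xp E).Adj ⟨k + 1, by omega⟩ ⟨k, by omega⟩ :=
      adj_mk2 (show k + 1 ≠ k by omega) (Or.inl ⟨rfl, show k + 1 ≤ N by omega⟩)
    exact hadj.reachable.trans (ih (by omega))

lemma gr_connected {xp : Prop} {E : ℕ → ℕ → Prop} (hN : 3 ≤ N)
    (hP : xp ∨ E (N + 1) (N + 2) ∨ E (N + 2) (N + 1)) : (gr N xp E).Connected := by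
  rw [SimpleGraph.connected_iff]
  refine ⟨fun u v => ?_, ⟨⟨0, by omega⟩⟩⟩
  have hq0 : (gr N xp E).Adj ⟨N + 2, by omega⟩ ⟨0, by omega⟩ :=
    adj_mk2 (show N + 2 ≠ 0 by omega) (Or.inr (Or.inl ⟨rfl, Or.inl rfl⟩))
  have key : ∀ w : F N, (gr N xp E).Reachable w ⟨0, by omega⟩ := by
    intro w
    have hw5 := w.isLt
    rcases (by omega : w.val ≤ N ∨ w.val = N + 1 ∨ w.val = N + 2 ∨ w.val = N + 3 ∨ w.val = N + 4)
      with h | h | h | h | h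
    · have hw : w = ⟨w.val, by omega⟩ := Fin.ext rfl
      rw [hw]; exact reach_x0 w.val h
    · rw [(eq_mk_iff.mpr h : w = ⟨N + 1, by omega⟩)]
      rcases hP with hxp | hpq | hqp
      · exact (adj_mk2 (show N + 1 ≠ 0 by omega)
          (Or.inr (Or.inl ⟨rfl, Or.inr ⟨rfl, hxp⟩⟩)) : (gr N xp E).Adj _ ⟨0, by omega⟩).reachable
      · exact ((adj_mk1 (show N + 1 ≠ N + 2 by omega) (Or.inr (Or.inr (Or.inr hpq))) :
          (gr N xp E).Adj _ ⟨N + 2, by omega⟩).reachable).trans hq0.reachable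
      · exact ((adj_mk2 (show N + 1 ≠ N + 2 by omega) (Or.inr (Or.inr (Or.inr hqp))) :
          (gr N xp E).Adj _ ⟨N + 2, by omega⟩).reachable).trans hq0.reachable
    · rw [(eq_mk_iff.mpr h : w = ⟨N + 2, by omega⟩)]; exact hq0.reachable
    · rw [(eq_mk_iff.mpr h : w = ⟨N + 3, by omega⟩)]
      exact ((adj_mk2 (show N + 3 ≠ N by omega) (Or.inr (Or.inr (Or.inl ⟨rfl, Or.inl rfl⟩))) :
        (gr N xp E).Adj _ ⟨N, by omega⟩).reachable).trans (reach_x0 N le_rfl)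
    · rw [(eq_mk_iff.mpr h : w = ⟨N + 4, by omega⟩)]
      exact ((adj_mk2 (show N + 4 ≠ N by omega) (Or.inr (Or.inr (Or.inl ⟨rfl, Or.inr rfl⟩))) :
        (gr N xp E).Adj _ ⟨N, by omega⟩).reachable).trans (reach_x0 N le_rfl)
  exact (key u).trans (key v).symm

lemma univ_czfs {V : Type*} [Nonempty V] {G : SimpleGraph V} (hg : G.Connected) :
    G.IsConnectedZFS Set.univ := by
  refine ⟨fun v => .init v trivial, ?_⟩
  rw [SimpleGraph.connected_iff]
  refine ⟨fun a b => ?_, ⟨⟨Classical.arbitrary V, trivial⟩⟩⟩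
  have h : G.Reachable a.val b.val := hg.preconnected a.val b.val
  convert h.map (⟨fun v => ⟨v, trivial⟩, fun {x y} hxy => hxy⟩ :
    G →g G.induce (Set.univ : Set V)) <;> exact Subtype.ext rfl

/-! ### Lower bound for connected zero forcing sets -/

lemma ht_of_left {a : F N} (h : a.val = N + 1 ∨ a.val = N + 2) : ht N a = 0 := by
  simp only [ht]; split_ifs <;> omega

lemma ht_of_right {b : F N} (h : b.val = N + 3 ∨ b.val = N + 4) : ht N b = N := by
  simp only [ht]; split_ifs <;> omega

lemma czfs_lower {E : ℕ → ℕ → Prop} (hE : EOK N E) (hN : 3 ≤ N) {S : Set (F N)}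
    (hS : (gr N True E).IsConnectedZFS S) : N + 1 ≤ S.ncard := by
  -- a colored vertex among {p, q}
  obtain ⟨a, ha, hav⟩ : ∃ a ∈ S, a.val = N + 1 ∨ a.val = N + 2 := by
    by_cases h1 : (⟨N + 1, by omega⟩ : F N) ∈ S
    · exact ⟨_, h1, Or.inl rfl⟩
    by_cases h2 : (⟨N + 2, by omega⟩ : F N) ∈ S
    · exact ⟨_, h2, Or.inr rfl⟩
    · exact absurd ((demandL hE trivial h1 h2 (hS.1 ⟨N + 1, by omega⟩)).1) (by simp)
  -- a colored vertex among {r, s}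
  obtain ⟨b, hb, hbv⟩ : ∃ b ∈ S, b.val = N + 3 ∨ b.val = N + 4 := by
    by_cases h1 : (⟨N + 3, by omega⟩ : F N) ∈ S
    · exact ⟨_, h1, Or.inl rfl⟩
    by_cases h2 : (⟨N + 4, by omega⟩ : F N) ∈ S
    · exact ⟨_, h2, Or.inr rfl⟩
    · exact absurd ((demandR hE h1 h2 (hS.1 ⟨N + 3, by omega⟩)).1) (by simp)
  obtain ⟨W⟩ := hS.2.preconnected ⟨a, ha⟩ ⟨b, hb⟩
  have hx : ∀ i (_ : 0 < i) (_ : i < N), (⟨i, by omega⟩ : F N) ∈ S := by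
    intro i hi1 hi2
    obtain ⟨w, hwS, hw⟩ := walk_iv hE W i (show ht N a ≤ i by rw [ht_of_left hav]; omega)
      (show i ≤ ht N b by rw [ht_of_right hbv]; omega)
    have hwv : w.val = i := by simp only [ht] at hw; split_ifs at hw <;> omega
    rwa [(eq_mk_iff.mpr hwv : w = _)] at hwS
  -- the injection
  have hane : a ≠ b := by intro h; rw [h] at hav; omega
  set f : Fin (N + 1) → F N := fun j =>
    if j.val = 0 then a else if j.val = N then b else ⟨j.val, by omega⟩ with hf
  have hinj : Function.Injective f := by
    intro j k h
    have hj := j.isLt; have hk := k.isLt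
    simp only [hf] at h
    split_ifs at h with h1 h2 h3 h4 h5 h6 h7 h8 h9 <;>
      first
      | (exact Fin.ext (by omega))
      | (exact absurd h hane)
      | (exact absurd h.symm hane)
      | (exfalso; have := mk_eq_iff.mp h.symm; omega)
      | (exfalso; have := mk_eq_iff.mp h; omega)
      | (exact Fin.ext (mk_eq_iff.mp (h.trans (Fin.ext rfl : (⟨k.val, by omega⟩ : F N) = ⟨k.val, by omega⟩))))
  have himg : f '' Set.univ ⊆ S := by
    rintro _ ⟨j, -, rfl⟩
    have hj := j.isLt
    simp only [hf]
    split_ifs with h1 h2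
    · exact ha
    · exact hb
    · exact hx j.val (by omega) (by omega)
  calc N + 1 = (Set.univ : Set (Fin (N + 1))).ncard := by
        rw [Set.ncard_univ, Nat.card_eq_fintype_card, Fintype.card_fin]
    _ = (f '' Set.univ).ncard := (Set.ncard_image_of_injective _ hinj).symm
    _ ≤ S.ncard := Set.ncard_le_ncard himg (Set.toFinite S)

lemma czf_lower {E : ℕ → ℕ → Prop} (hE : EOK N E) (hN : 3 ≤ N)
    (hconn : (gr N True E).Connected) : N + 1 ≤ (gr N True E).czfNumber := by
  have hne : {n | ∃ S : Set (F N), (gr N True E).IsConnectedZFS S ∧ S.ncard = n}.Nonempty :=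
    ⟨(Set.univ : Set (F N)).ncard, Set.univ, univ_czfs hconn, rfl⟩
  obtain ⟨S, hS, hcard⟩ := Nat.sInf_mem hne
  rw [SimpleGraph.czfNumber, ← hcard]
  exact czfs_lower hE hN hS

lemma czf_le {V : Type*} {G : SimpleGraph V} {S : Set V} {n : ℕ}
    (h1 : G.IsConnectedZFS S) (h2 : S.ncard = n) : G.czfNumber ≤ n :=
  Nat.sInf_le ⟨S, h1, h2⟩

/-! ### The four concrete graphs -/

/-- Path with a "cherry" (two pendant leaves) at each end. -/
def GD (N : ℕ) : SimpleGraph (F N) := gr N True (fun _ _ => False)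

/-- `GD` plus the edge `p — r` between leaves at opposite ends. -/
def G1 (N : ℕ) : SimpleGraph (F N) := gr N True (fun a b => a = N + 1 ∧ b = N + 3)

/-- Path with a triangle at each end. -/
def G2 (N : ℕ) : SimpleGraph (F N) :=
  gr N True (fun a b => (a = N + 1 ∧ b = N + 2) ∨ (a = N + 3 ∧ b = N + 4))

/-- `G2` minus the edge `x₀ — p`. -/
def H2 (N : ℕ) : SimpleGraph (F N) :=
  gr N False (fun a b => (a = N + 1 ∧ b = N + 2) ∨ (a = N + 3 ∧ b = N + 4))

lemma EOK_D : EOK N (fun _ _ => False) := fun _ _ h => h.elim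
lemma EOK_2 : EOK N (fun a b => (a = N + 1 ∧ b = N + 2) ∨ (a = N + 3 ∧ b = N + 4)) :=
  fun _ _ h => h

/-! ### The small connected forcing set of `G1` -/

def S1 (N : ℕ) : Set (F N) :=
  {⟨N + 2, by omega⟩, ⟨0, by omega⟩, ⟨N + 1, by omega⟩, ⟨N + 3, by omega⟩, ⟨N, by omega⟩}

lemma S1_chain (hN : 3 ≤ N) : ∀ m (_ : m ≤ N), (G1 N).Forced (S1 N) ⟨m, by omega⟩ := by
  intro m
  induction m using Nat.strong_induction_on with
  | _ m ih =>
    intro hm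
    rcases Nat.eq_zero_or_pos m with h0 | h0
    · subst h0
      exact .init _ (by right; left; rfl)
    rcases eq_or_ne m N with hmN | hmN
    · subst hmN
      exact .init _ (by right; right; right; right; exact rfl)
    -- force x_m from x_{m-1}
    have hprev : (G1 N).Forced (S1 N) ⟨m - 1, by omega⟩ := ih (m - 1) (by omega) (by omega)
    refine .force _ _ hprev (adj_mk1 (show (m : ℕ) - 1 ≠ m by omega)
      (Or.inl ⟨show m - 1 + 1 = m by omega, show m ≤ N by omega⟩)) ?_
    intro w hw hwne
    have hw5 := w.isLt
    obtain ⟨hne, h | h⟩ := adj_iff.mp hw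
    all_goals simp only [Fin.val_mk] at hne h
    · rcases h with ⟨h1, h2⟩ | ⟨h1, h2⟩ | ⟨h1, h2⟩ | ⟨h1, h2⟩
      · -- w = x_m : excluded
        exact absurd (eq_mk_iff.mpr (show w.val = m by omega)) hwne
      · -- m - 1 = 0 : w is q or p
        rcases h2 with h2 | ⟨h2, -⟩
        · exact .init _ (by left; exact Fin.ext h2)
        · exact .init _ (by right; right; left; exact Fin.ext h2)
      · omega
      · omega
    · rcases h with ⟨h1, h2⟩ | ⟨h1, h2⟩ | ⟨h1, h2⟩ | ⟨h1, h2⟩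
      · -- w = x_{m-2}
        rw [(eq_mk_iff.mpr (show w.val = m - 2 by omega) : w = ⟨m - 2, by omega⟩)]
        exact ih (m - 2) (by omega) (by omega)
      · omega
      · omega
      · omega

lemma S1_czfs (hN : 3 ≤ N) : (G1 N).IsConnectedZFS (S1 N) := by
  constructor
  · -- zero forcing
    have hS : (G1 N).Forced (S1 N) ⟨N + 4, by omega⟩ := by
      refine .force ⟨N, by omega⟩ _ (S1_chain hN N le_rfl)
        (adj_mk1 (show (N : ℕ) ≠ N + 4 by omega) (Or.inr (Or.inr (Or.inl ⟨rfl, Or.inr rfl⟩)))) ?_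
      intro w hw hwne
      have hw5 := w.isLt
      obtain ⟨hne, h | h⟩ := adj_iff.mp hw
      all_goals simp only [Fin.val_mk] at hne h
      · rcases h with ⟨h1, h2⟩ | ⟨h1, h2⟩ | ⟨h1, h2⟩ | ⟨h1, h2⟩
        · omega
        · omega
        · rcases h2 with h2 | h2
          · exact .init _ (by right; right; right; left; exact Fin.ext h2)
          · exact absurd (eq_mk_iff.mpr h2) hwne
        · omega
      · rcases h with ⟨h1, h2⟩ | ⟨h1, h2⟩ | ⟨h1, h2⟩ | ⟨h1, h2⟩
        · rw [(eq_mk_iff.mpr (show w.val = N - 1 by omega) : w = ⟨N - 1, by omega⟩)]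
          exact S1_chain hN (N - 1) (by omega)
        · omega
        · omega
        · omega
    intro v
    have hv5 := v.isLt
    rcases (by omega : v.val ≤ N ∨ v.val = N + 1 ∨ v.val = N + 2 ∨ v.val = N + 3 ∨ v.val = N + 4)
      with h | h | h | h | h
    · rw [(eq_mk_iff.mpr rfl : v = ⟨v.val, v.isLt⟩)]; exact S1_chain hN v.val h
    · exact .init _ (by rw [(eq_mk_iff.mpr h : v = _)]; right; right; left; rfl)
    · exact .init _ (by rw [(eq_mk_iff.mpr h : v = _)]; left; rfl)
    · exact .init _ (by rw [(eq_mk_iff.mpr h : v = _)]; right; right; right; left; rfl)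
    · rw [(eq_mk_iff.mpr h : v = ⟨N + 4, by omega⟩)]; exact hS
  · -- connectivity of the induced graph
    rw [SimpleGraph.connected_iff]
    have hq : (⟨N + 2, by omega⟩ : F N) ∈ S1 N := by left; rfl
    have hx0 : (⟨0, by omega⟩ : F N) ∈ S1 N := by right; left; rfl
    have hp : (⟨N + 1, by omega⟩ : F N) ∈ S1 N := by right; right; left; rfl
    have hr : (⟨N + 3, by omega⟩ : F N) ∈ S1 N := by right; right; right; left; rfl
    have hxN : (⟨N, by omega⟩ : F N) ∈ S1 N := by right; right; right; right; exact rfl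
    refine ⟨fun u v => ?_, ⟨⟨_, hx0⟩⟩⟩
    have a1 : (G1 N).Adj ⟨0, by omega⟩ ⟨N + 2, by omega⟩ :=
      adj_mk1 (show (0 : ℕ) ≠ N + 2 by omega) (Or.inr (Or.inl ⟨rfl, Or.inl rfl⟩))
    have a2 : (G1 N).Adj ⟨0, by omega⟩ ⟨N + 1, by omega⟩ :=
      adj_mk1 (show (0 : ℕ) ≠ N + 1 by omega) (Or.inr (Or.inl ⟨rfl, Or.inr ⟨rfl, trivial⟩⟩))
    have a3 : (G1 N).Adj ⟨N + 1, by omega⟩ ⟨N + 3, by omega⟩ :=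
      adj_mk1 (show N + 1 ≠ N + 3 by omega) (Or.inr (Or.inr (Or.inr ⟨rfl, rfl⟩)))
    have a4 : (G1 N).Adj ⟨N, by omega⟩ ⟨N + 3, by omega⟩ :=
      adj_mk1 (show (N : ℕ) ≠ N + 3 by omega) (Or.inr (Or.inr (Or.inl ⟨rfl, Or.inl rfl⟩)))
    set GI := (G1 N).induce (S1 N) with hGI
    have e1 : GI.Adj ⟨_, hq⟩ ⟨_, hx0⟩ := SimpleGraph.comap_adj.mpr a1.symm
    have e2 : GI.Adj ⟨_, hp⟩ ⟨_, hx0⟩ := SimpleGraph.comap_adj.mpr a2.symm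
    have e3 : GI.Adj ⟨_, hr⟩ ⟨_, hp⟩ := SimpleGraph.comap_adj.mpr a3.symm
    have e4 : GI.Adj ⟨_, hxN⟩ ⟨_, hr⟩ := SimpleGraph.comap_adj.mpr a4
    have key : ∀ w : ↥(S1 N), GI.Reachable w ⟨_, hx0⟩ := by
      rintro ⟨w, hw⟩
      have hw2 := hw
      rcases hw2 with h | h | h | h | h
      · subst h; exact e1.reachable
      · subst h; exact Reachable.refl _
      · subst h; exact e2.reachable
      · subst h; exact e3.reachable.trans e2.reachable
      · have h2 : w = ⟨N, by omega⟩ := h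
        subst h2
        exact e4.reachable.trans (e3.reachable.trans e2.reachable)
    exact (key u).trans (key v).symm

/-! ### The small connected forcing set of `H2` -/

def S2 (N : ℕ) : Set (F N) := {⟨N, by omega⟩, ⟨N + 3, by omega⟩, ⟨N + 4, by omega⟩}

lemma S2_chain (hN : 3 ≤ N) : ∀ k (_ : k ≤ N), (H2 N).Forced (S2 N) ⟨N - k, by omega⟩ := by
  intro k
  induction k using Nat.strong_induction_on with
  | _ k ih =>
    intro hk
    rcases Nat.eq_zero_or_pos k with h0 | h0
    · subst h0
      exact .init _ (by left; exact Fin.ext rfl)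
    -- force x_{N-k} from x_{N-k+1}
    have hprev : (H2 N).Forced (S2 N) ⟨N - (k - 1), by omega⟩ := ih (k - 1) (by omega) (by omega)
    refine .force _ _ hprev (adj_mk2 (show N - (k - 1) ≠ N - k by omega)
      (Or.inl ⟨show N - k + 1 = N - (k - 1) by omega, show N - (k - 1) ≤ N by omega⟩)) ?_
    intro w hw hwne
    have hw5 := w.isLt
    obtain ⟨hne, h | h⟩ := adj_iff.mp hw
    all_goals simp only [Fin.val_mk] at hne h
    · rcases h with ⟨h1, h2⟩ | ⟨h1, h2⟩ | ⟨h1, h2⟩ | ⟨h1, h2⟩ | ⟨h1, h2⟩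
      · -- w = x_{N-k+2}
        rcases eq_or_ne k 1 with hk1 | hk1
        · -- then N - (k-1) = N and w would have value N+1 > N : contradiction
          omega
        · rw [(eq_mk_iff.mpr (show w.val = N - (k - 2) by omega) : w = ⟨N - (k - 2), by omega⟩)]
          exact ih (k - 2) (by omega) (by omega)
      · omega
      · -- N - (k-1) = N, so k = 1, w = r or s : initial
        rcases h2 with h2 | h2
        · exact .init _ (by right; left; exact Fin.ext h2)
        · exact .init _ (by right; right; exact Fin.ext h2)
      · omega
      · omega
    · rcases h with ⟨h1, h2⟩ | ⟨h1, h2⟩ | ⟨h1, h2⟩ | ⟨h1, h2⟩ | ⟨h1, h2⟩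
      · -- w = x_{N-k} : excluded
        exact absurd (eq_mk_iff.mpr (show w.val = N - k by omega)) hwne
      · -- w = x_0 with N-(k-1) ∈ {N+2} ∪ {N+1}∧False : impossible
        rcases h2 with h2 | ⟨-, h2⟩
        · omega
        · exact h2.elim
      · omega
      · omega
      · omega

lemma S2_czfs (hN : 3 ≤ N) : (H2 N).IsConnectedZFS (S2 N) := by
  have hchain : ∀ m (_ : m ≤ N), (H2 N).Forced (S2 N) ⟨m, by omega⟩ := by
    intro m hm
    have := S2_chain hN (N - m) (by omega)
    rwa [(eq_mk_iff.mpr (show (⟨N - (N - m), by omega⟩ : F N).val = m by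
      simp only [Fin.val_mk]; omega) : (⟨N - (N - m), by omega⟩ : F N) = ⟨m, by omega⟩)] at this
  constructor
  · -- x₀ forces q, then q forces p
    have hq : (H2 N).Forced (S2 N) ⟨N + 2, by omega⟩ := by
      refine .force ⟨0, by omega⟩ _ (hchain 0 (by omega))
        (adj_mk1 (show (0 : ℕ) ≠ N + 2 by omega) (Or.inr (Or.inl ⟨rfl, Or.inl rfl⟩))) ?_
      intro w hw hwne
      have hw5 := w.isLt
      obtain ⟨hne, h | h⟩ := adj_iff.mp hw
      all_goals simp only [Fin.val_mk] at hne h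
      · rcases h with ⟨h1, h2⟩ | ⟨h1, h2⟩ | ⟨h1, h2⟩ | ⟨h1, h2⟩ | ⟨h1, h2⟩
        · -- w = x₁
          rw [(eq_mk_iff.mpr (show w.val = 1 by omega) : w = ⟨1, by omega⟩)]
          exact hchain 1 (by omega)
        · rcases h2 with h2 | ⟨-, h2⟩
          · exact absurd (eq_mk_iff.mpr h2) hwne
          · exact h2.elim
        · omega
        · omega
        · omega
      · rcases h with ⟨h1, h2⟩ | ⟨h1, h2⟩ | ⟨h1, h2⟩ | ⟨h1, h2⟩ | ⟨h1, h2⟩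
        · omega
        · omega
        · omega
        · omega
        · omega
    have hp : (H2 N).Forced (S2 N) ⟨N + 1, by omega⟩ := by
      refine .force ⟨N + 2, by omega⟩ _ hq
        (adj_mk2 (show N + 2 ≠ N + 1 by omega) (Or.inr (Or.inr (Or.inr (Or.inl ⟨rfl, rfl⟩))))) ?_
      intro w hw hwne
      have hw5 := w.isLt
      obtain ⟨hne, h | h⟩ := adj_iff.mp hw
      all_goals simp only [Fin.val_mk] at hne h
      · rcases h with ⟨h1, h2⟩ | ⟨h1, h2⟩ | ⟨h1, h2⟩ | ⟨h1, h2⟩ | ⟨h1, h2⟩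
        · omega
        · omega
        · omega
        · omega
        · omega
      · rcases h with ⟨h1, h2⟩ | ⟨h1, h2⟩ | ⟨h1, h2⟩ | ⟨h1, h2⟩ | ⟨h1, h2⟩
        · omega
        · -- w = x₀
          rcases h2 with h2 | ⟨-, h2⟩
          · rw [(eq_mk_iff.mpr h1 : w = ⟨0, by omega⟩)]
            exact hchain 0 (by omega)
          · exact h2.elim
        · omega
        · -- E: w = p excluded
          exact absurd (eq_mk_iff.mpr h1) hwne
        · omega
    intro v
    have hv5 := v.isLt
    rcases (by omega : v.val ≤ N ∨ v.val = N + 1 ∨ v.val = N + 2 ∨ v.val = N + 3 ∨ v.val = N + 4)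
      with h | h | h | h | h
    · rw [(eq_mk_iff.mpr rfl : v = ⟨v.val, v.isLt⟩)]; exact hchain v.val h
    · rw [(eq_mk_iff.mpr h : v = ⟨N + 1, by omega⟩)]; exact hp
    · rw [(eq_mk_iff.mpr h : v = ⟨N + 2, by omega⟩)]; exact hq
    · exact .init _ (by rw [(eq_mk_iff.mpr h : v = _)]; right; left; rfl)
    · exact .init _ (by rw [(eq_mk_iff.mpr h : v = _)]; right; right; exact rfl)
  · -- connectivity: a triangle
    rw [SimpleGraph.connected_iff]
    have hxN : (⟨N, by omega⟩ : F N) ∈ S2 N := by left; rfl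
    have hr : (⟨N + 3, by omega⟩ : F N) ∈ S2 N := by right; left; rfl
    have hs : (⟨N + 4, by omega⟩ : F N) ∈ S2 N := by right; right; exact rfl
    refine ⟨fun u v => ?_, ⟨⟨_, hxN⟩⟩⟩
    have a1 : (H2 N).Adj ⟨N + 3, by omega⟩ ⟨N, by omega⟩ :=
      adj_mk2 (show N + 3 ≠ N by omega) (Or.inr (Or.inr (Or.inl ⟨rfl, Or.inl rfl⟩)))
    have a2 : (H2 N).Adj ⟨N + 4, by omega⟩ ⟨N, by omega⟩ :=
      adj_mk2 (show N + 4 ≠ N by omega) (Or.inr (Or.inr (Or.inl ⟨rfl, Or.inr rfl⟩)))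
    have e1 : ((H2 N).induce (S2 N)).Adj ⟨_, hr⟩ ⟨_, hxN⟩ := SimpleGraph.comap_adj.mpr a1
    have e2 : ((H2 N).induce (S2 N)).Adj ⟨_, hs⟩ ⟨_, hxN⟩ := SimpleGraph.comap_adj.mpr a2
    have key : ∀ w : ↥(S2 N), ((H2 N).induce (S2 N)).Reachable w ⟨_, hxN⟩ := by
      rintro ⟨w, hw⟩
      have hw2 := hw
      rcases hw2 with h | h | h
      · subst h; exact Reachable.refl _
      · subst h; exact e1.reachable
      · have h2 : w = ⟨N + 4, by omega⟩ := h
        subst h2; exact e2.reachable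
    exact (key u).trans (key v).symm

/-! ### Deleting the special edges -/

lemma GD_not_pr (hN : 3 ≤ N) {u v : F N} (h : (GD N).Adj u v) :
    ¬(u.val = N + 1 ∧ v.val = N + 3) := by
  rintro ⟨hp, hr⟩
  obtain ⟨hne, h | h⟩ := adj_iff.mp h <;>
    rcases h with ⟨h1, h2⟩ | ⟨h1, h2⟩ | ⟨h1, h2⟩ | h <;> first | omega | exact h.elim

lemma del1 (hN : 3 ≤ N) :
    (G1 N).deleteEdges {s(⟨N + 1, by omega⟩, ⟨N + 3, by omega⟩)} = GD N := by
  ext u v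
  have hu5 := u.isLt; have hv5 := v.isLt
  rw [SimpleGraph.deleteEdges_adj, Set.mem_singleton_iff, Sym2.eq_iff]
  constructor
  · rintro ⟨h1, h2⟩
    obtain ⟨hne, h | h⟩ := adj_iff.mp h1
    · refine adj_iff.mpr ⟨hne, Or.inl ?_⟩
      rcases h with h | h | h | ⟨ha, hb⟩
      · exact Or.inl h
      · exact Or.inr (Or.inl h)
      · exact Or.inr (Or.inr (Or.inl h))
      · exact absurd (Or.inl ⟨eq_mk_iff.mpr ha, eq_mk_iff.mpr hb⟩) h2
    · refine adj_iff.mpr ⟨hne, Or.inr ?_⟩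
      rcases h with h | h | h | ⟨ha, hb⟩
      · exact Or.inl h
      · exact Or.inr (Or.inl h)
      · exact Or.inr (Or.inr (Or.inl h))
      · exact absurd (Or.inr ⟨eq_mk_iff.mpr hb, eq_mk_iff.mpr ha⟩) h2
  · intro h
    refine ⟨?_, ?_⟩
    · obtain ⟨hne, h' | h'⟩ := adj_iff.mp h
      · refine adj_iff.mpr ⟨hne, Or.inl ?_⟩
        rcases h' with h' | h' | h' | h'
        · exact Or.inl h'
        · exact Or.inr (Or.inl h')
        · exact Or.inr (Or.inr (Or.inl h'))
        · exact h'.elim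
      · refine adj_iff.mpr ⟨hne, Or.inr ?_⟩
        rcases h' with h' | h' | h' | h'
        · exact Or.inl h'
        · exact Or.inr (Or.inl h')
        · exact Or.inr (Or.inr (Or.inl h'))
        · exact h'.elim
    · rintro (⟨h3, h4⟩ | ⟨h3, h4⟩)
      · exact GD_not_pr hN h ⟨congrArg Fin.val h3, congrArg Fin.val h4⟩
      · exact GD_not_pr hN h.symm ⟨congrArg Fin.val h4, congrArg Fin.val h3⟩

lemma H2_not_x0p (hN : 3 ≤ N) {u v : F N} (h : (H2 N).Adj u v) :
    ¬(u.val = 0 ∧ v.val = N + 1) := by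
  rintro ⟨hp, hr⟩
  obtain ⟨hne, h | h⟩ := adj_iff.mp h <;>
    rcases h with ⟨h1, h2⟩ | ⟨h1, h2 | ⟨h2, h3⟩⟩ | ⟨h1, h2⟩ | ⟨h1, h2⟩ | ⟨h1, h2⟩ <;>
      first | omega | exact h3.elim

lemma del2 (hN : 3 ≤ N) :
    (G2 N).deleteEdges {s(⟨0, by omega⟩, ⟨N + 1, by omega⟩)} = H2 N := by
  ext u v
  have hu5 := u.isLt; have hv5 := v.isLt
  rw [SimpleGraph.deleteEdges_adj, Set.mem_singleton_iff, Sym2.eq_iff]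
  constructor
  · rintro ⟨h1, h2⟩
    obtain ⟨hne, h | h⟩ := adj_iff.mp h1
    · refine adj_iff.mpr ⟨hne, Or.inl ?_⟩
      rcases h with h | ⟨ha, hb | ⟨hb, -⟩⟩ | h | h
      · exact Or.inl h
      · exact Or.inr (Or.inl ⟨ha, Or.inl hb⟩)
      · exact absurd (Or.inl ⟨eq_mk_iff.mpr ha, eq_mk_iff.mpr hb⟩) h2
      · exact Or.inr (Or.inr (Or.inl h))
      · exact Or.inr (Or.inr (Or.inr h))
    · refine adj_iff.mpr ⟨hne, Or.inr ?_⟩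
      rcases h with h | ⟨ha, hb | ⟨hb, -⟩⟩ | h | h
      · exact Or.inl h
      · exact Or.inr (Or.inl ⟨ha, Or.inl hb⟩)
      · exact absurd (Or.inr ⟨eq_mk_iff.mpr hb, eq_mk_iff.mpr ha⟩) h2
      · exact Or.inr (Or.inr (Or.inl h))
      · exact Or.inr (Or.inr (Or.inr h))
  · intro h
    refine ⟨?_, ?_⟩
    · obtain ⟨hne, h' | h'⟩ := adj_iff.mp h
      · refine adj_iff.mpr ⟨hne, Or.inl ?_⟩
        rcases h' with h' | ⟨ha, hb | ⟨-, hb⟩⟩ | h' | h'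
        · exact Or.inl h'
        · exact Or.inr (Or.inl ⟨ha, Or.inl hb⟩)
        · exact hb.elim
        · exact Or.inr (Or.inr (Or.inl h'))
        · exact Or.inr (Or.inr (Or.inr h'))
      · refine adj_iff.mpr ⟨hne, Or.inr ?_⟩
        rcases h' with h' | ⟨ha, hb | ⟨-, hb⟩⟩ | h' | h'
        · exact Or.inl h'
        · exact Or.inr (Or.inl ⟨ha, Or.inl hb⟩)
        · exact hb.elim
        · exact Or.inr (Or.inr (Or.inl h'))
        · exact Or.inr (Or.inr (Or.inr h'))
    · rintro (⟨h3, h4⟩ | ⟨h3, h4⟩)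
      · exact H2_not_x0p hN h ⟨congrArg Fin.val h3, congrArg Fin.val h4⟩
      · exact H2_not_x0p hN h.symm ⟨congrArg Fin.val h4, congrArg Fin.val h3⟩

/-! ### Cardinalities -/

lemma ncard_S1 (hN : 3 ≤ N) : (S1 N).ncard = 5 := by
  have h1 : (⟨N + 2, by omega⟩ : F N) ∉
      ({⟨0, by omega⟩, ⟨N + 1, by omega⟩, ⟨N + 3, by omega⟩, ⟨N, by omega⟩} : Set (F N)) := by
    intro h
    rcases h with h | h | h | h
    · exact (by omega : ¬(N + 2 = (0 : ℕ))) (congrArg Fin.val h)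
    · exact (by omega : ¬(N + 2 = N + 1)) (congrArg Fin.val h)
    · exact (by omega : ¬(N + 2 = N + 3)) (congrArg Fin.val h)
    · exact (by omega : ¬(N + 2 = N)) (congrArg Fin.val h)
  have h2 : (⟨0, by omega⟩ : F N) ∉
      ({⟨N + 1, by omega⟩, ⟨N + 3, by omega⟩, ⟨N, by omega⟩} : Set (F N)) := by
    intro h
    rcases h with h | h | h
    · exact (by omega : ¬((0 : ℕ) = N + 1)) (congrArg Fin.val h)
    · exact (by omega : ¬((0 : ℕ) = N + 3)) (congrArg Fin.val h)
    · exact (by omega : ¬((0 : ℕ) = N)) (congrArg Fin.val h)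
  have h3 : (⟨N + 1, by omega⟩ : F N) ∉ ({⟨N + 3, by omega⟩, ⟨N, by omega⟩} : Set (F N)) := by
    intro h
    rcases h with h | h
    · exact (by omega : ¬(N + 1 = N + 3)) (congrArg Fin.val h)
    · exact (by omega : ¬(N + 1 = N)) (congrArg Fin.val h)
  have h4 : (⟨N + 3, by omega⟩ : F N) ∉ ({⟨N, by omega⟩} : Set (F N)) := by
    intro h
    exact (by omega : ¬(N + 3 = N)) (congrArg Fin.val h)
  rw [S1, Set.ncard_insert_of_notMem h1, Set.ncard_insert_of_notMem h2,
    Set.ncard_insert_of_notMem h3, Set.ncard_insert_of_notMem h4, Set.ncard_singleton]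

lemma ncard_S2 (hN : 3 ≤ N) : (S2 N).ncard = 3 := by
  have h1 : (⟨N, by omega⟩ : F N) ∉ ({⟨N + 3, by omega⟩, ⟨N + 4, by omega⟩} : Set (F N)) := by
    intro h
    rcases h with h | h
    · exact (by omega : ¬(N = N + 3)) (congrArg Fin.val h)
    · exact (by omega : ¬(N = N + 4)) (congrArg Fin.val h)
  have h2 : (⟨N + 3, by omega⟩ : F N) ∉ ({⟨N + 4, by omega⟩} : Set (F N)) := by
    intro h
    exact (by omega : ¬(N + 3 = N + 4)) (congrArg Fin.val h)
  rw [S2, Set.ncard_insert_of_notMem h1, Set.ncard_insert_of_notMem h2, Set.ncard_singleton]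

/-! ### Putting it together -/

lemma neg_case (hN : 3 ≤ N) :
    (G1 N).Connected ∧ s(⟨N + 1, by omega⟩, (⟨N + 3, by omega⟩ : F N)) ∈ (G1 N).edgeSet ∧
    ((G1 N).deleteEdges {s(⟨N + 1, by omega⟩, ⟨N + 3, by omega⟩)}).Connected ∧
    (G1 N).czfNumber ≤ 5 ∧
    N + 1 ≤ ((G1 N).deleteEdges {s(⟨N + 1, by omega⟩, ⟨N + 3, by omega⟩)}).czfNumber := by
  have hD : (GD N).Connected := gr_connected hN (Or.inl trivial)
  refine ⟨gr_connected hN (Or.inl trivial), ?_, ?_, ?_, ?_⟩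
  · exact adj_mk1 (show N + 1 ≠ N + 3 by omega) (Or.inr (Or.inr (Or.inr ⟨rfl, rfl⟩)))
  · rw [del1 hN]; exact hD
  · exact czf_le (S1_czfs hN) (ncard_S1 hN)
  · rw [del1 hN]; exact czf_lower EOK_D hN hD

lemma pos_case (hN : 3 ≤ N) :
    (G2 N).Connected ∧ s((⟨0, by omega⟩ : F N), (⟨N + 1, by omega⟩ : F N)) ∈ (G2 N).edgeSet ∧
    ((G2 N).deleteEdges {s(⟨0, by omega⟩, ⟨N + 1, by omega⟩)}).Connected ∧
    N + 1 ≤ (G2 N).czfNumber ∧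
    ((G2 N).deleteEdges {s(⟨0, by omega⟩, ⟨N + 1, by omega⟩)}).czfNumber ≤ 3 := by
  refine ⟨gr_connected hN (Or.inl trivial), ?_, ?_, ?_, ?_⟩
  · exact adj_mk1 (show (0 : ℕ) ≠ N + 1 by omega) (Or.inr (Or.inl ⟨rfl, Or.inr ⟨rfl, trivial⟩⟩))
  · rw [del2 hN]
    exact gr_connected hN (Or.inr (Or.inl (Or.inl ⟨rfl, rfl⟩)))
  · exact czf_lower EOK_2 hN (gr_connected hN (Or.inl trivial))
  · rw [del2 hN]; exact czf_le (S2_czfs hN) (ncard_S2 hN)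

end ZCF

/-- The connected forcing spread of a (non-cut) edge can be arbitrarily negative
and arbitrarily positive. -/
theorem stmt0 (c₁ c₂ : ℤ) (hc₁ : c₁ < 0) (hc₂ : 0 < c₂) :
    (∃ (V₁ : Type) (_ : Fintype V₁) (G₁ : SimpleGraph V₁) (e₁ : Sym2 V₁),
      G₁.Connected ∧ e₁ ∈ G₁.edgeSet ∧ (G₁.deleteEdges {e₁}).Connected ∧
      (G₁.czfNumber : ℤ) - ((G₁.deleteEdges {e₁}).czfNumber : ℤ) < c₁) ∧
    (∃ (V₂ : Type) (_ : Fintype V₂) (G₂ : SimpleGraph V₂) (e₂ : Sym2 V₂),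
      G₂.Connected ∧ e₂ ∈ G₂.edgeSet ∧ (G₂.deleteEdges {e₂}).Connected ∧
      (G₂.czfNumber : ℤ) - ((G₂.deleteEdges {e₂}).czfNumber : ℤ) > c₂) := by
  constructor
  · -- arbitrarily negative
    set N := c₁.natAbs + 7 with hNdef
    have hN : 3 ≤ N := by omega
    obtain ⟨hconn, hedge, hconn', hle, hge⟩ := ZCF.neg_case hN
    refine ⟨ZCF.F N, inferInstance, ZCF.G1 N,
      s(⟨N + 1, by omega⟩, ⟨N + 3, by omega⟩), hconn, hedge, hconn', ?_⟩
    have hc : c₁ = -(c₁.natAbs : ℤ) := by omega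
    omega
  · -- arbitrarily positive
    set N := c₂.toNat + 7 with hNdef
    have hN : 3 ≤ N := by omega
    obtain ⟨hconn, hedge, hconn', hge, hle⟩ := ZCF.pos_case hN
    refine ⟨ZCF.F N, inferInstance, ZCF.G2 N,
      s(⟨0, by omega⟩, ⟨N + 1, by omega⟩), hconn, hedge, hconn', ?_⟩
    omega
end

section
/- If G = (V,E) is a connected graph with |E| = Ω(|V|²), then Z_c(G) = Θ(|V|). Concretely: for every constant c > 0 there is c' > 0 such that every connected graph G with |E| ≥ c·|V|² satisfies Z_c(G) ≥ c'·|V|. -/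
set_option linter.unusedSectionVars false

namespace MyAux

variable {V : Type} [Fintype V] [DecidableEq V] (G : SimpleGraph V) [Fintype G.edgeSet]

lemma forced_mono {S S' : Set V} (h : S ⊆ S') {v : V} (hv : G.Forced S v) : G.Forced S' v := by
  induction hv with
  | init v hv => exact .init v (h hv)
  | force u v hu huv hrest ih1 ih2 => exact .force u v ih1 huv (fun w hw hne => ih2 w hw hne)

lemma exists_move {T : Set V} {v : V} (hf : G.Forced T v) :
    v ∈ T ∨ ∃ u ∈ T, ∃ x, x ∉ T ∧ G.Adj u x ∧ ∀ w, G.Adj u w → w = x ∨ w ∈ T := by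
  induction hf with
  | init v hv => exact Or.inl hv
  | force u v hu huv hrest ih1 ih2 =>
    rcases ih1 with hu' | hmove
    · by_cases hmoves : ∃ u ∈ T, ∃ x, x ∉ T ∧ G.Adj u x ∧ ∀ w, G.Adj u w → w = x ∨ w ∈ T
      · exact Or.inr hmoves
      · have hall : ∀ w, G.Adj u w → w ≠ v → w ∈ T := by
          intro w hw hne
          rcases ih2 w hw hne with h | h
          · exact h
          · exact absurd h hmoves
        by_cases hv : v ∈ T
        · exact Or.inl hv
        · refine Or.inr ⟨u, hu', v, hv, huv, fun w hw => ?_⟩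
          by_cases hwv : w = v
          · exact Or.inl hwv
          · exact Or.inr (hall w hw hwv)
    · exact Or.inr hmove

noncomputable def insideEdges (T : Finset V) : Finset (Sym2 V) := by
  classical exact G.edgeFinset.filter (fun e => ∀ v ∈ e, v ∈ T)

lemma mem_insideEdges {T : Finset V} {e : Sym2 V} :
    e ∈ insideEdges G T ↔ e ∈ G.edgeSet ∧ ∀ v ∈ e, v ∈ T := by
  classical
  simp [insideEdges, Finset.mem_filter, SimpleGraph.mem_edgeFinset]

lemma insideEdges_univ : insideEdges G Finset.univ = G.edgeFinset := by
  classical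
  ext e
  simp [mem_insideEdges, SimpleGraph.mem_edgeFinset]

lemma insideEdges_card_le (T : Finset V) : (insideEdges G T).card ≤ T.card * T.card := by
  classical
  have h : insideEdges G T ⊆ (T ×ˢ T).image (fun p => s(p.1, p.2)) := by
    intro e he
    induction e with
    | h a b =>
      rw [mem_insideEdges] at he
      refine Finset.mem_image.mpr ⟨(a, b), ?_, rfl⟩
      exact Finset.mem_product.mpr ⟨he.2 a (by simp), he.2 b (by simp)⟩
  calc (insideEdges G T).card ≤ ((T ×ˢ T).image (fun p => s(p.1, p.2))).card :=
        Finset.card_le_card h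
    _ ≤ (T ×ˢ T).card := Finset.card_image_le
    _ = T.card * T.card := by rw [Finset.card_product]

lemma insideEdges_insert {T F : Finset V} {x : V} (hx : x ∉ T)
    (hF : ∀ z ∈ T, G.Adj z x → z ∉ F) :
    (insideEdges G (insert x T)).card ≤ (insideEdges G T).card + (T \ F).card := by
  classical
  have h : insideEdges G (insert x T) ⊆
      insideEdges G T ∪ (T \ F).image (fun z => s(z, x)) := by
    intro e he
    induction e with
    | h a b =>
      rw [mem_insideEdges] at he
      obtain ⟨hadj, hmem⟩ := he
      have hadj' : G.Adj a b := hadj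
      have ha := hmem a (by simp)
      have hb := hmem b (by simp)
      rw [Finset.mem_insert] at ha hb
      rcases ha with ha | ha
      · subst ha
        rcases hb with hb | hb
        · exact absurd hb.symm (G.ne_of_adj hadj')
        · refine Finset.mem_union_right _ (Finset.mem_image.mpr ⟨b, ?_, Sym2.eq_swap⟩)
          exact Finset.mem_sdiff.mpr ⟨hb, hF b hb hadj'.symm⟩
      · rcases hb with hb | hb
        · subst hb
          refine Finset.mem_union_right _ (Finset.mem_image.mpr ⟨a, ?_, rfl⟩)
          exact Finset.mem_sdiff.mpr ⟨ha, hF a ha hadj'⟩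
        · exact Finset.mem_union_left _ ((mem_insideEdges G).mpr ⟨hadj, by
            intro v hv
            rcases Sym2.mem_iff.mp hv with rfl | rfl
            · exact ha
            · exact hb⟩)
  calc (insideEdges G (insert x T)).card
      ≤ (insideEdges G T ∪ (T \ F).image (fun z => s(z, x))).card := Finset.card_le_card h
    _ ≤ (insideEdges G T).card + ((T \ F).image (fun z => s(z, x))).card :=
        Finset.card_union_le _ _
    _ ≤ (insideEdges G T).card + (T \ F).card := by
        exact Nat.add_le_add_left Finset.card_image_le _

end MyAux

namespace MyAux
variable {V : Type} [Fintype V] [DecidableEq V] (G : SimpleGraph V) [Fintype G.edgeSet]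

set_option linter.unusedSectionVars false

lemma key (k : ℕ) : ∀ d (T F : Finset V), F ⊆ T → T.card ≤ F.card + k →
    (∀ x ∈ F, ∀ w, G.Adj x w → w ∈ T) →
    (∀ v, G.Forced ↑T v) →
    Fintype.card V - T.card ≤ d →
    G.edgeFinset.card ≤ (insideEdges G T).card + k * (Fintype.card V - T.card) := by
  intro d
  induction d with
  | zero =>
    intro T F hFT hcard hclosed hforced hd
    have hTuniv : T = Finset.univ := by
      apply Finset.eq_univ_of_card
      have := Finset.card_le_univ T
      omega
    subst hTuniv
    rw [insideEdges_univ]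
    exact Nat.le_add_right _ _
  | succ d ih =>
    intro T F hFT hcard hclosed hforced hd
    by_cases hTuniv : T = Finset.univ
    · subst hTuniv
      rw [insideEdges_univ]
      exact Nat.le_add_right _ _
    · obtain ⟨v, hv⟩ : ∃ v, v ∉ T := by
        by_contra h
        push_neg at h
        exact hTuniv (Finset.eq_univ_iff_forall.mpr h)
      have hvT : v ∉ (↑T : Set V) := by simpa using hv
      rcases exists_move G (hforced v) with hmem | ⟨u, huT, x, hxT, hux, hrest⟩
      · exact absurd hmem hvT
      · have hxT' : x ∉ T := by simpa using hxT
        have huF : u ∉ F := by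
          intro huF
          exact hxT' (hclosed u huF x hux)
        have hcardT' : (insert x T).card = T.card + 1 := Finset.card_insert_of_notMem hxT'
        have hcardF' : (insert u F).card = F.card + 1 := Finset.card_insert_of_notMem huF
        have hcardV : T.card < Fintype.card V := by
          refine Finset.card_lt_card ?_
          exact Finset.ssubset_univ_iff.mpr hTuniv
        have hstep := ih (insert x T) (insert u F)
          (by
            intro z hz
            rcases Finset.mem_insert.mp hz with rfl | hz
            · exact Finset.mem_insert_of_mem huT
            · exact Finset.mem_insert_of_mem (hFT hz))
          (by omega)
          (by
            intro z hz w hw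
            rcases Finset.mem_insert.mp hz with rfl | hz
            · rcases hrest w hw with rfl | hwT
              · exact Finset.mem_insert_self _ _
              · exact Finset.mem_insert_of_mem (by simpa using hwT)
            · exact Finset.mem_insert_of_mem (hclosed z hz w hw))
          (by
            intro w
            refine forced_mono G ?_ (hforced w)
            intro z hz
            simp only [Finset.coe_insert, Set.mem_insert_iff]
            exact Or.inr hz)
          (by
            rw [hcardT']
            omega)
        have hins := insideEdges_insert G hxT' (by
          intro z hz hzx hzF
          exact hxT' (hclosed z hzF x (hzx)))
        have hsd : (T \ F).card ≤ k := by
          rw [Finset.card_sdiff_of_subset hFT]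
          omega
        have heq : Fintype.card V - T.card = (Fintype.card V - (insert x T).card) + 1 := by
          rw [hcardT']; omega
        calc G.edgeFinset.card
            ≤ (insideEdges G (insert x T)).card + k * (Fintype.card V - (insert x T).card) :=
              hstep
          _ ≤ ((insideEdges G T).card + (T \ F).card) + k * (Fintype.card V - (insert x T).card) :=
              Nat.add_le_add_right hins _
          _ ≤ ((insideEdges G T).card + k) + k * (Fintype.card V - (insert x T).card) :=
              Nat.add_le_add_right (Nat.add_le_add_left hsd _) _
          _ = (insideEdges G T).card + k * ((Fintype.card V - (insert x T).card) + 1) := by ring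
          _ = (insideEdges G T).card + k * (Fintype.card V - T.card) := by rw [← heq]

lemma zfs_bound (S : Set V) (hS : G.IsZeroForcingSet S) :
    G.edgeSet.ncard ≤ S.ncard * Fintype.card V := by
  classical
  have hcoe : (↑(S.toFinset) : Set V) = S := Set.coe_toFinset S
  have h := key G S.toFinset.card (Fintype.card V) S.toFinset ∅
    (Finset.empty_subset _) (by simp) (by simp)
    (by intro v; rw [hcoe]; exact hS v)
    (Nat.sub_le _ _)
  have h2 : (insideEdges G S.toFinset).card ≤ S.toFinset.card * S.toFinset.card :=
    insideEdges_card_le G _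
  have h3 : S.toFinset.card ≤ Fintype.card V := Finset.card_le_univ _
  have hm : G.edgeSet.ncard = G.edgeFinset.card := Set.ncard_eq_toFinset_card' _
  rw [hm, Set.ncard_eq_toFinset_card']
  calc G.edgeFinset.card
      ≤ (insideEdges G S.toFinset).card + S.toFinset.card * (Fintype.card V - S.toFinset.card) :=
        h
    _ ≤ S.toFinset.card * S.toFinset.card
        + S.toFinset.card * (Fintype.card V - S.toFinset.card) := Nat.add_le_add_right h2 _
    _ = S.toFinset.card * (S.toFinset.card + (Fintype.card V - S.toFinset.card)) := by ring
    _ = S.toFinset.card * Fintype.card V := by rw [Nat.add_sub_cancel' h3]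

end MyAux

/-- A connected graph with `Ω(n²)` edges has connected forcing number `Ω(n)`
(hence `Θ(n)`). -/
theorem stmt2 (c : ℝ) (hc : 0 < c) :
    ∃ c' : ℝ, 0 < c' ∧ ∀ (V : Type) [Fintype V] (G : SimpleGraph V),
      G.Connected →
      c * (Fintype.card V : ℝ) ^ 2 ≤ (G.edgeSet.ncard : ℝ) →
      c' * (Fintype.card V : ℝ) ≤ (G.czfNumber : ℝ) := by
    classical
  refine ⟨c, hc, ?_⟩
  intro V _ G hconn hedge
  have hne : Nonempty V := hconn.nonempty
  have hn : 0 < Fintype.card V := Fintype.card_pos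
  have hset : Fintype.card V ∈
      {n | ∃ S : Set V, G.IsConnectedZFS S ∧ S.ncard = n} := by
    refine ⟨Set.univ, ⟨fun v => .init v (Set.mem_univ v), ?_⟩, ?_⟩
    · exact (G.induceUnivIso).connected_iff.mpr hconn
    · simp [Set.ncard_univ]
  obtain ⟨S, hS, hcard⟩ := Nat.sInf_mem (⟨_, hset⟩ :
    {n | ∃ S : Set V, G.IsConnectedZFS S ∧ S.ncard = n}.Nonempty)
  have hbound : G.edgeSet.ncard ≤ G.czfNumber * Fintype.card V := by
    have := MyAux.zfs_bound G S hS.1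
    rw [hcard] at this
    exact this
  have hb : (G.edgeSet.ncard : ℝ) ≤ (G.czfNumber : ℝ) * (Fintype.card V : ℝ) := by
    exact_mod_cast hbound
  have hnR : (0 : ℝ) < (Fintype.card V : ℝ) := by exact_mod_cast hn
  have key : c * (Fintype.card V : ℝ) * (Fintype.card V : ℝ) ≤
      (G.czfNumber : ℝ) * (Fintype.card V : ℝ) := by
    calc c * (Fintype.card V : ℝ) * (Fintype.card V : ℝ)
        = c * (Fintype.card V : ℝ) ^ 2 := by ring
      _ ≤ (G.edgeSet.ncard : ℝ) := hedge
      _ ≤ _ := hb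
  exact le_of_mul_le_mul_right key hnR
end

section
/- Let G be a connected graph, S a separating vertex set of G, and V₁,…,V_k the vertex sets of the connected components of G − S, where each vertex of S has a neighbor in each V_i. Then every connected zero forcing set of G contains a vertex from at least k−1 of the sets V₁,…,V_k. -/
/-- If `S` is a separating set each of whose vertices has a neighbor in each
component of `G − S`, then a connected forcing set meets at least `k − 1`
of the `k` components. -/
theorem stmt3 {V : Type} [Fintype V] (G : SimpleGraph V) (hG : G.Connected)
    (S : Set V) (hS : S.Nonempty) (k : ℕ) (hk : 2 ≤ k) (C : Fin k → Set V)
    (hcomp : ∀ i, G.IsCompOfDel S (C i))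
    (hdisj : ∀ i j, i ≠ j → Disjoint (C i) (C j))
    (hcover : (⋃ i, C i) = Sᶜ)
    (hinc : ∀ s ∈ S, ∀ i, ∃ u ∈ C i, G.Adj s u) :
    ∀ R : Set V, G.IsConnectedZFS R →
      ∀ i j, C i ∩ R = ∅ → C j ∩ R = ∅ → i = j := by
  intro R hR i j hi hj
  by_contra hij
  have key : ∀ v, G.Forced R v → v ∉ C i ∧ v ∉ C j := by
    intro v hv
    induction hv with
    | init v hv =>
      refine ⟨fun h => ?_, fun h => ?_⟩
      · exact Set.eq_empty_iff_forall_notMem.mp hi v ⟨h, hv⟩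
      · exact Set.eq_empty_iff_forall_notMem.mp hj v ⟨h, hv⟩
    | force u v hu huv hrest ihu ihrest =>
      constructor
      · intro hvC
        have huS : u ∈ S := by
          by_contra huS
          exact ihu.1 ((hcomp i).2.2.2 v hvC u huv.symm huS)
        obtain ⟨w, hwC, hsw⟩ := hinc u huS j
        have hwv : w ≠ v := fun h =>
          Set.disjoint_left.mp (hdisj i j hij) hvC (h ▸ hwC)
        exact (ihrest w hsw hwv).2 hwC
      · intro hvC
        have huS : u ∈ S := by
          by_contra huS
          exact ihu.2 ((hcomp j).2.2.2 v hvC u huv.symm huS)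
        obtain ⟨w, hwC, hsw⟩ := hinc u huS i
        have hwv : w ≠ v := fun h =>
          Set.disjoint_left.mp (hdisj i j hij) (h ▸ hwC) hvC
        exact (ihrest w hsw hwv).1 hwC
  obtain ⟨v, hv⟩ := (hcomp i).1
  exact (key v (hR.1 v)).1 hv
end

section
/- Let G be a connected graph, S a separating vertex set, and V₁,…,V_k (k ≥ 3) the components of G − S, where each vertex of S has a neighbor in each component. Then every connected zero forcing set of G contains a vertex of S. -/
/-- If `S` is a separating set with `k ≥ 3` components, each vertex of `S` having a
neighbor in each component, then every connected forcing set contains a vertex of `S`. -/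
theorem stmt4 {V : Type} [Fintype V] (G : SimpleGraph V) (hG : G.Connected)
    (S : Set V) (hS : S.Nonempty) (k : ℕ) (hk : 3 ≤ k) (C : Fin k → Set V)
    (hcomp : ∀ i, G.IsCompOfDel S (C i))
    (hdisj : ∀ i j, i ≠ j → Disjoint (C i) (C j))
    (hcover : (⋃ i, C i) = Sᶜ)
    (hinc : ∀ s ∈ S, ∀ i, ∃ u ∈ C i, G.Adj s u) :
    ∀ R : Set V, G.IsConnectedZFS R → (S ∩ R).Nonempty := by
  intro R hR
  by_contra hsr
  rw [Set.not_nonempty_iff_eq_empty] at hsr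
  obtain ⟨hzfs, hconn⟩ := hR
  have hRS : ∀ x ∈ R, x ∉ S := by
    intro x hx hxS
    have : x ∈ S ∩ R := ⟨hxS, hx⟩
    rw [hsr] at this; exact this
  -- R is nonempty
  have hRne : R.Nonempty := by
    by_contra h
    rw [Set.not_nonempty_iff_eq_empty] at h
    subst h
    obtain ⟨s, hs⟩ := hS
    have hemp : ∀ v, G.Forced (∅ : Set V) v → False := by
      intro v hv
      induction hv with
      | init v hv => exact hv
      | force u v hu huv hrest ih ihrest => exact ih
    exact hemp s (hzfs s)
  obtain ⟨r, hr⟩ := hRne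
  have hrc : r ∈ ⋃ i, C i := by
    rw [hcover]; exact hRS r hr
  obtain ⟨i₀, hi₀⟩ := Set.mem_iUnion.mp hrc
  -- R is contained in C i₀
  have aux : ∀ (a b : ↥R) (w : (G.induce R).Walk a b), (a : V) ∈ C i₀ → (b : V) ∈ C i₀ := by
    intro a b w
    induction w with
    | nil => exact id
    | cons h p ih =>
      rename_i a' b' c'
      intro ha
      have hadj : G.Adj (a' : V) (b' : V) := h
      exact ih ((hcomp i₀).2.2.2 a' ha b' hadj (hRS b' b'.2))
  have hRsub : R ⊆ C i₀ := by
    intro x hx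
    obtain ⟨w⟩ := hconn.preconnected ⟨r, hr⟩ ⟨x, hx⟩
    exact aux _ _ w hi₀
  -- two distinct indices different from i₀
  have hj : ∃ j j' : Fin k, j ≠ j' ∧ j ≠ i₀ ∧ j' ≠ i₀ := by
    have h0 : (0 : ℕ) < k := by omega
    have h1 : (1 : ℕ) < k := by omega
    have h2 : (2 : ℕ) < k := by omega
    by_cases ha : (⟨0, h0⟩ : Fin k) = i₀
    · exact ⟨⟨1, h1⟩, ⟨2, h2⟩, by simp [Fin.ext_iff], by rw [← ha]; simp [Fin.ext_iff],
        by rw [← ha]; simp [Fin.ext_iff]⟩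
    · by_cases hb : (⟨1, h1⟩ : Fin k) = i₀
      · exact ⟨⟨0, h0⟩, ⟨2, h2⟩, by simp [Fin.ext_iff], ha, by rw [← hb]; simp [Fin.ext_iff]⟩
      · exact ⟨⟨0, h0⟩, ⟨1, h1⟩, by simp [Fin.ext_iff], ha, hb⟩
  obtain ⟨j, j', hjj', hji, hj'i⟩ := hj
  -- invariant: all forced vertices lie in C i₀ ∪ S
  have hinv : ∀ v, G.Forced R v → v ∈ C i₀ ∪ S := by
    intro v hv
    induction hv with
    | init v hv => exact Or.inl (hRsub hv)
    | force u v hu huv hrest ih ihrest =>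
      rcases ih with huC | huS
      · by_cases hvS : v ∈ S
        · exact Or.inr hvS
        · exact Or.inl ((hcomp i₀).2.2.2 u huC v huv hvS)
      · -- u ∈ S : contradiction via two other components
        exfalso
        obtain ⟨y, hy, hay⟩ := hinc u huS j
        obtain ⟨y', hy', hay'⟩ := hinc u huS j'
        have hyy' : y ≠ y' := fun h => (hdisj j j' hjj').ne_of_mem hy (h ▸ hy') rfl
        have key : ∀ z : V, ∀ i : Fin k, i ≠ i₀ → z ∈ C i → G.Adj u z → z ≠ v → False := by
          intro z i hii hz haz hzv
          rcases ihrest z haz hzv with hzC | hzS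
          · exact (hdisj i i₀ hii).ne_of_mem hz hzC rfl
          · exact ((hcomp i).2.1.ne_of_mem hz hzS) rfl
        by_cases hyv : y = v
        · exact key y' j' hj'i hy' hay' (fun h => hyy' (hyv.trans h.symm))
        · exact key y j hji hy hay hyv
  -- final contradiction
  obtain ⟨y, hy⟩ := (hcomp j).1
  rcases hinv y (hzfs y) with hyC | hyS
  · exact (hdisj j i₀ hji).ne_of_mem hy hyC rfl
  · exact ((hcomp j).2.1.ne_of_mem hy hyS) rfl
end

section
/- Let G be a connected graph, S a separating vertex set with exactly two components G[V₁], G[V₂] of G − S, where each vertex of S has a neighbor in both V₁ and V₂, and suppose Z(G[V₁]) > |S| and Z(G[V₂]) > |S|. Then every connected zero forcing set of G contains a vertex of S. -/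
namespace ZFAux

variable {V : Type} [Fintype V]

/-- Iterated color-change operator. -/
def iterF (G : SimpleGraph V) (R : Set V) : ℕ → Set V
  | 0 => R
  | n+1 => iterF G R n ∪
      {v | ∃ u ∈ iterF G R n, G.Adj u v ∧ ∀ w, G.Adj u w → w ≠ v → w ∈ iterF G R n}

lemma iterF_mono (G : SimpleGraph V) (R : Set V) {m n : ℕ} (h : m ≤ n) :
    iterF G R m ⊆ iterF G R n := by
  induction n with
  | zero => simpa [Nat.le_zero.mp h] using subset_rfl
  | succ n ih =>
    rcases Nat.le_succ_iff.mp h with h' | h'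
    · exact (ih h').trans (by intro x hx; exact Or.inl hx)
    · simp [h']

lemma forced_mem_iterF (G : SimpleGraph V) (R : Set V) {v : V}
    (h : G.Forced R v) : ∃ n, v ∈ iterF G R n := by
  induction h with
  | init v hv => exact ⟨0, hv⟩
  | force u v hu huv hrest ihu ih =>
    classical
    set rk : V → ℕ := fun w => sInf {n | w ∈ iterF G R n} with hrk
    set N : ℕ := Finset.univ.sup rk with hN
    have key : ∀ w : V, (∃ n, w ∈ iterF G R n) → w ∈ iterF G R N := by
      intro w hw
      have h1 : w ∈ iterF G R (rk w) := Nat.sInf_mem hw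
      exact iterF_mono G R (Finset.le_sup (Finset.mem_univ w)) h1
    refine ⟨N + 1, Or.inr ⟨u, key u ihu, huv, ?_⟩⟩
    intro w hadj hne
    exact key w (ih w hadj hne)

/-- The core lemma: if `R ⊆ V₁` is a zero forcing set of `G`, where `V₁, V₂` are the two
sides of the separator `S`, then `Z(G[V₂]) ≤ |S|`. -/
lemma key_lemma (G : SimpleGraph V) (S V₁ V₂ : Set V)
    (hd : Disjoint V₁ V₂) (hV₂S : Disjoint V₂ S)
    (hcover : ∀ x, x ∈ S ∨ x ∈ V₁ ∨ x ∈ V₂)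
    (hclosed : ∀ u ∈ V₁, ∀ w, G.Adj u w → w ∉ S → w ∈ V₁)
    (R : Set V) (hR : G.IsZeroForcingSet R) (hRV₁ : R ⊆ V₁) :
    (G.induce V₂).zfNumber ≤ S.ncard := by
  classical
  set P : ℕ → Set V := iterF G R with hP
  set rk : V → ℕ := fun v => sInf {n | v ∈ P n} with hrk
  have hmem : ∀ v : V, v ∈ P (rk v) := fun v => Nat.sInf_mem (forced_mem_iterF G R (hR v))
  have hle : ∀ v n, v ∈ P n → rk v ≤ n := fun v n h => Nat.sInf_le h
  have hpos : ∀ v ∈ V₂, 1 ≤ rk v := by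
    intro v hv
    by_contra h
    have h0 : rk v = 0 := by omega
    have : v ∈ P 0 := h0 ▸ hmem v
    exact (hd.le_bot ⟨hRV₁ this, hv⟩)
  -- the set of vertices of V₂ forced "from S"
  set T : Set ↥V₂ := {v | ∃ s, s ∈ S ∧ G.Adj s ↑v ∧ s ∈ P (rk ↑v - 1) ∧
      ∀ w, G.Adj s w → w ≠ ↑v → w ∈ P (rk ↑v - 1)} with hT
  -- cardinality bound
  have hcard : T.ncard ≤ S.ncard := by
    set f : ↥V₂ → V := fun v => if h : v ∈ T then h.choose else ↑v with hf
    have hfs : ∀ v (h : v ∈ T), f v ∈ S ∧ G.Adj (f v) ↑v ∧ f v ∈ P (rk ↑v - 1) ∧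
        ∀ w, G.Adj (f v) w → w ≠ ↑v → w ∈ P (rk ↑v - 1) := by
      intro v h
      simp only [hf, dif_pos h]
      exact h.choose_spec
    have hinj : Set.InjOn f T := by
      intro a ha b hb hab
      by_contra hne
      have hane : (↑a : V) ≠ ↑b := fun h => hne (Subtype.ext h)
      have h1 := hfs a ha
      have h2 := hfs b hb
      -- b is a neighbor of f a other than a, so rk b ≤ rk a - 1, and symmetrically
      have hba : (↑b : V) ∈ P (rk ↑a - 1) := h1.2.2.2 ↑b (hab ▸ h2.2.1) hane.symm
      have hab' : (↑a : V) ∈ P (rk ↑b - 1) := h2.2.2.2 ↑a (hab ▸ h1.2.1) hane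
      have r1 : rk ↑b ≤ rk ↑a - 1 := hle _ _ hba
      have r2 : rk ↑a ≤ rk ↑b - 1 := hle _ _ hab'
      have p1 : 1 ≤ rk (↑a : V) := hpos ↑a a.2
      have p2 : 1 ≤ rk (↑b : V) := hpos ↑b b.2
      omega
    calc T.ncard = (f '' T).ncard := (Set.ncard_image_of_injOn hinj).symm
      _ ≤ S.ncard := Set.ncard_le_ncard (by rintro x ⟨v, hv, rfl⟩; exact (hfs v hv).1)
        (Set.toFinite S)
  -- T is a zero forcing set of G[V₂]
  have hforce : ∀ n (v : ↥V₂), rk ↑v ≤ n → (G.induce V₂).Forced T v := by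
    intro n
    induction n with
    | zero => intro v hv; exact absurd hv (by have := hpos ↑v v.2; omega)
    | succ n ih =>
      intro v hv
      by_cases hc : rk ↑v ≤ n
      · exact ih v hc
      have hn : rk ↑v = n + 1 := by omega
      have h1 : (↑v : V) ∈ P (n + 1) := hn ▸ hmem ↑v
      have h2 : (↑v : V) ∉ P n := fun h => hc (hle _ _ h)
      rcases h1 with h1 | ⟨u, hu, huv, hrest⟩
      · exact absurd h1 h2
      rcases hcover u with hus | hu1 | hu2
      · -- forcer in S : v ∈ T
        refine SimpleGraph.Forced.init v ?_
        refine ⟨u, hus, huv, ?_, ?_⟩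
        · rw [hn]; simpa using hu
        · intro w hw hwv; rw [hn]; simpa using hrest w hw hwv
      · -- forcer in V₁ : impossible
        exfalso
        have : (↑v : V) ∉ S := fun h => hV₂S.le_bot ⟨v.2, h⟩
        exact hd.le_bot ⟨hclosed u hu1 ↑v huv this, v.2⟩
      · -- forcer in V₂
        refine SimpleGraph.Forced.force ⟨u, hu2⟩ v (ih ⟨u, hu2⟩ (hle _ _ hu)) (by exact huv) ?_
        intro w hadj hne
        have hwne : (↑w : V) ≠ ↑v := fun h => hne (Subtype.ext h)
        exact ih w (hle _ _ (hrest ↑w hadj hwne))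
  have hZFS : (G.induce V₂).IsZeroForcingSet T := fun v => hforce (rk ↑v) v le_rfl
  exact le_trans (Nat.sInf_le ⟨T, hZFS, rfl⟩) hcard

end ZFAux

/-- If `G − S` has exactly two components `V₁, V₂`, each vertex of `S` has neighbors in
both, and `Z(G[Vᵢ]) > |S|` for `i = 1, 2`, then every connected forcing set meets `S`. -/
theorem stmt5 {V : Type} [Fintype V] (G : SimpleGraph V) (hG : G.Connected)
    (S V₁ V₂ : Set V) (hS : S.Nonempty)
    (h1 : G.IsCompOfDel S V₁) (h2 : G.IsCompOfDel S V₂)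
    (hd : Disjoint V₁ V₂) (hcover : V₁ ∪ V₂ = Sᶜ)
    (hinc : ∀ s ∈ S, (∃ u ∈ V₁, G.Adj s u) ∧ (∃ u ∈ V₂, G.Adj s u))
    (hz1 : S.ncard < (G.induce V₁).zfNumber)
    (hz2 : S.ncard < (G.induce V₂).zfNumber) :
    ∀ R : Set V, G.IsConnectedZFS R → (S ∩ R).Nonempty := by
  intro R hR
  by_contra hcon
  rw [Set.not_nonempty_iff_eq_empty] at hcon
  have hRS : ∀ r ∈ R, r ∉ S := by
    intro r hr hrs
    exact absurd (Set.mem_inter hrs hr) (hcon ▸ Set.notMem_empty r)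
  have hcov : ∀ x, x ∈ S ∨ x ∈ V₁ ∨ x ∈ V₂ := by
    intro x
    by_cases hx : x ∈ S
    · exact Or.inl hx
    · have : x ∈ V₁ ∪ V₂ := hcover ▸ hx
      exact Or.inr this
  -- R is nonempty
  have hRne : R.Nonempty := Set.nonempty_coe_sort.mp hR.2.nonempty
  obtain ⟨x, hx⟩ := hRne
  -- walk staying lemma
  have hstay : ∀ (W : Set V), (∀ u ∈ W, ∀ w, G.Adj u w → w ∉ S → w ∈ W) →
      ∀ (a b : ↥R), (G.induce R).Walk a b → ↑a ∈ W → ↑b ∈ W := by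
    intro W hcl a b w
    induction w with
    | nil => exact id
    | @cons a c b h p ih =>
      intro ha
      exact ih (hcl ↑a ha ↑c h (hRS ↑c c.2))
  have hsub : ∀ (W : Set V), (∀ u ∈ W, ∀ w, G.Adj u w → w ∉ S → w ∈ W) →
      (x ∈ W) → R ⊆ W := by
    intro W hcl hxW y hy
    obtain ⟨p⟩ := hR.2.preconnected ⟨x, hx⟩ ⟨y, hy⟩
    exact hstay W hcl _ _ p hxW
  rcases hcov x with hxS | hx1 | hx2
  · exact absurd hxS (hRS x hx)
  · have := ZFAux.key_lemma G S V₁ V₂ hd h2.2.1 hcov h1.2.2.2 R hR.1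
      (hsub V₁ h1.2.2.2 hx1)
    omega
  · have := ZFAux.key_lemma G S V₂ V₁ hd.symm h1.2.1
      (fun x => by rcases hcov x with h | h | h <;> tauto) h2.2.2.2 R hR.1
      (hsub V₂ h2.2.2.2 hx2)
    omega
end

section
/- Let G be a connected graph and v a vertex such that G − v has exactly two connected components and v is attached to no pendant path (i.e., no component of G - v is a path one of whose ends is adjacent to v). Then v belongs to every connected zero forcing set of G. -/
set_option linter.unusedSectionVars false

namespace ZFAux

variable {V : Type} [Fintype V]

/-- fuel-bounded forcing -/
inductive FLe (G : SimpleGraph V) (S : Set V) : ℕ → V → Prop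
  | init (n : ℕ) (v : V) (hv : v ∈ S) : FLe G S n v
  | force (n : ℕ) (u v : V) (hu : FLe G S n u) (huv : G.Adj u v)
      (hrest : ∀ w, G.Adj u w → w ≠ v → FLe G S n w) : FLe G S (n + 1) v

theorem FLe.mono {G : SimpleGraph V} {S : Set V} {m n : ℕ} (hmn : m ≤ n) {x : V}
    (h : FLe G S m x) : FLe G S n x := by
  induction h generalizing n with
  | init _ v hv => exact .init _ _ hv
  | force k u v hu huv hrest ih ihr =>
      obtain ⟨n', rfl⟩ : ∃ n', n = n' + 1 := ⟨n - 1, by omega⟩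
      exact .force n' u v (ih (by omega)) huv (fun w hw hne => ihr w hw hne (by omega))

theorem FLe.zero_inv {G : SimpleGraph V} {S : Set V} {x : V} (h : FLe G S 0 x) : x ∈ S := by
  cases h with
  | init _ _ hv => exact hv

theorem FLe.force_inv {G : SimpleGraph V} {S : Set V} {k : ℕ} {x : V}
    (h : FLe G S k x) (hx : x ∉ S) :
    ∃ m z, k = m + 1 ∧ FLe G S m z ∧ G.Adj z x ∧
      ∀ w, G.Adj z w → w ≠ x → FLe G S m w := by
  cases h with
  | init _ _ hv => exact absurd hv hx
  | force n u _ hu huv hrest => exact ⟨n, u, rfl, hu, huv, hrest⟩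

theorem forced_iff {G : SimpleGraph V} {S : Set V} {x : V} :
    G.Forced S x ↔ ∃ n, FLe G S n x := by
  constructor
  · intro h
    induction h with
    | init v hv => exact ⟨0, .init 0 v hv⟩
    | force u v hu huv hrest ih ihr =>
        classical
        obtain ⟨n₀, hn₀⟩ := ih
        have H : ∀ w : V, ∃ n, G.Adj u w → w ≠ v → FLe G S n w := by
          intro w
          by_cases hw : G.Adj u w ∧ w ≠ v
          · obtain ⟨n, hn⟩ := ihr w hw.1 hw.2
            exact ⟨n, fun _ _ => hn⟩
          · exact ⟨0, fun h1 h2 => absurd ⟨h1, h2⟩ hw⟩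
        choose f hf using H
        set N := max n₀ (Finset.univ.sup f) with hN
        refine ⟨N + 1, .force N u v (hn₀.mono (le_max_left _ _)) huv
          (fun w hw hne => (hf w hw hne).mono
            (le_trans (Finset.le_sup (Finset.mem_univ w)) (le_max_right _ _)))⟩
  · rintro ⟨n, h⟩
    induction h with
    | init _ v hv => exact .init v hv
    | force n u w hu huv hrest ih ihr =>
        exact .force u w ih huv (fun z hz hne => ihr z hz hne)

section Inv
variable {V : Type} [Fintype V] (G : SimpleGraph V) (S Q : Set V) (v : V)

theorem inv_main
    (hclos : ∀ u ∈ Q, ∀ w, G.Adj u w → w ≠ v → w ∈ Q)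
    (hSQ : ∀ u ∈ Q, u ∉ S) : ∀ n : ℕ,
    ((∃ u ∈ Q, FLe G S n u) → ∀ w, G.Adj v w → w ∈ Q → FLe G S n w) ∧
    (∀ x ∈ Q, ∀ x' ∈ Q, FLe G S n x → FLe G S n x' →
      (∃ y ∈ Q, G.Adj x y ∧ ¬ FLe G S n y) →
      (∃ y' ∈ Q, G.Adj x' y' ∧ ¬ FLe G S n y') → x = x') := by
  intro n
  induction n with
  | zero =>
      constructor
      · rintro ⟨u, huQ, h0⟩
        exact absurd h0.zero_inv (hSQ u huQ)
      · intro x hx x' hx' hfx _ _ _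
        exact absurd hfx.zero_inv (hSQ x hx)
  | succ n IH =>
      obtain ⟨IH1, IH2⟩ := IH
      constructor
      · -- INV1 at n+1
        rintro ⟨u, huQ, hfu⟩ w hvw hwQ
        by_cases hCn : ∃ u ∈ Q, FLe G S n u
        · exact (IH1 hCn w hvw hwQ).mono (Nat.le_succ n)
        · obtain ⟨m, z, hm, hz, hzu, hzall⟩ := hfu.force_inv (hSQ u huQ)
          have hmeq : m = n := by omega
          subst m
          have hzv : z = v := by
            by_contra hne
            exact hCn ⟨z, hclos u huQ z hzu.symm hne, hz⟩
          subst hzv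
          rcases eq_or_ne w u with rfl | hne
          · exact hfu
          · exact (hzall w hvw hne).mono (Nat.le_succ n)
      · -- INV2 at n+1
        rintro x hxQ x' hx'Q hfx hfx' ⟨y, hyQ, hxy, hfy⟩ ⟨y', hy'Q, hx'y', hfy'⟩
        obtain ⟨m, z, hm, hz, hzx, hzall⟩ := hfx.force_inv (hSQ x hxQ)
        have hmeq : m = n := by omega
        subst m
        obtain ⟨m', z', hm', hz', hz'x', hz'all⟩ := hfx'.force_inv (hSQ x' hx'Q)
        have hm2eq : m' = n := by omega
        subst m'
        have hfyn : ¬ FLe G S n y := fun h => hfy (h.mono (Nat.le_succ n))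
        have hfy'n : ¬ FLe G S n y' := fun h => hfy' (h.mono (Nat.le_succ n))
        by_cases hCn : ∃ u ∈ Q, FLe G S n u
        · have hNv : ∀ w, G.Adj v w → w ∈ Q → FLe G S n w := IH1 hCn
          by_cases hox : FLe G S n x <;> by_cases hox' : FLe G S n x'
          · -- both old
            exact IH2 x hxQ x' hx'Q hox hox' ⟨y, hyQ, hxy, hfyn⟩ ⟨y', hy'Q, hx'y', hfy'n⟩
          · -- x old, x' new
            have hz'v : z' ≠ v := fun h => hox' (hNv x' (h ▸ hz'x') hx'Q)
            have hz'Q : z' ∈ Q := hclos x' hx'Q z' hz'x'.symm hz'v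
            have : z' = x :=
              IH2 z' hz'Q x hxQ hz' hox ⟨x', hx'Q, hz'x', hox'⟩ ⟨y, hyQ, hxy, hfyn⟩
            subst this
            have hyx' : y ≠ x' := fun h => hfy (h ▸ hfx')
            exact absurd (hz'all y hxy hyx') hfyn
          · -- x new, x' old
            have hzv : z ≠ v := fun h => hox (hNv x (h ▸ hzx) hxQ)
            have hzQ : z ∈ Q := hclos x hxQ z hzx.symm hzv
            have : z = x' :=
              IH2 z hzQ x' hx'Q hz hox' ⟨x, hxQ, hzx, hox⟩ ⟨y', hy'Q, hx'y', hfy'n⟩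
            subst this
            have hy'x : y' ≠ x := fun h => hfy' (h ▸ hfx)
            exact absurd (hzall y' hx'y' hy'x) hfy'n
          · -- both new
            have hzv : z ≠ v := fun h => hox (hNv x (h ▸ hzx) hxQ)
            have hzQ : z ∈ Q := hclos x hxQ z hzx.symm hzv
            have hz'v : z' ≠ v := fun h => hox' (hNv x' (h ▸ hz'x') hx'Q)
            have hz'Q : z' ∈ Q := hclos x' hx'Q z' hz'x'.symm hz'v
            have hzz : z = z' :=
              IH2 z hzQ z' hz'Q hz hz' ⟨x, hxQ, hzx, hox⟩ ⟨x', hx'Q, hz'x', hox'⟩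
            subst hzz
            by_contra hne
            exact hox' (hzall x' hz'x' (Ne.symm hne))
        · -- C_n empty
          have hzv : z = v := by
            by_contra hne
            exact hCn ⟨z, hclos x hxQ z hzx.symm hne, hz⟩
          have hz'v : z' = v := by
            by_contra hne
            exact hCn ⟨z', hclos x' hx'Q z' hz'x'.symm hne, hz'⟩
          subst hzv; subst hz'v
          by_contra hne
          exact hCn ⟨x', hx'Q, hzall x' hz'x' (Ne.symm hne)⟩

end Inv
theorem key {V : Type} [Fintype V] (G : SimpleGraph V) (v : V) (Q : Set V)
    (hQ : G.IsCompOfDel {v} Q) (R : Set V)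
    (hZ : G.IsZeroForcingSet R) (hRQ : ∀ u ∈ Q, u ∉ R) :
    G.IsPendantPath v Q := by
  classical
  obtain ⟨hQne, hQdisj, hQconn, hQclos⟩ := hQ
  have hclos : ∀ u ∈ Q, ∀ w, G.Adj u w → w ≠ v → w ∈ Q := fun u hu w hw hne =>
    hQclos u hu w hw (by simpa using hne)
  have INV1 : ∀ n, (∃ u ∈ Q, FLe G R n u) → ∀ w, G.Adj v w → w ∈ Q → FLe G R n w :=
    fun n => (inv_main G R Q v hclos hRQ n).1
  have INV2 : ∀ n, ∀ x ∈ Q, ∀ x' ∈ Q, FLe G R n x → FLe G R n x' →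
      (∃ y ∈ Q, G.Adj x y ∧ ¬ FLe G R n y) →
      (∃ y' ∈ Q, G.Adj x' y' ∧ ¬ FLe G R n y') → x = x' :=
    fun n => (inv_main G R Q v hclos hRQ n).2
  have hex : ∀ u : V, ∃ n, FLe G R n u := fun u => forced_iff.mp (hZ u)
  set t : V → ℕ := fun u => Nat.find (hex u) with ht
  have htspec : ∀ u, FLe G R (t u) u := fun u => Nat.find_spec (hex u)
  have htmin : ∀ u m, FLe G R m u → t u ≤ m := fun u m h => Nat.find_min' (hex u) h
  have hlt : ∀ (u : V) (m : ℕ), m < t u → ¬ FLe G R m u := fun u m hm => Nat.find_min (hex u) hm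
  have htpos : ∀ u ∈ Q, 1 ≤ t u := by
    intro u hu
    by_contra h
    have h0 : t u = 0 := by omega
    exact hRQ u hu ((h0 ▸ htspec u).zero_inv)
  have hforcer : ∀ u ∈ Q, ∃ z, FLe G R (t u - 1) z ∧ G.Adj z u ∧
      (∀ w, G.Adj z w → w ≠ u → FLe G R (t u - 1) w) := by
    intro u hu
    obtain ⟨m, z, hm, hz, hzu, hzall⟩ := (htspec u).force_inv (hRQ u hu)
    have hm' : t u - 1 = m := by omega
    rw [hm']
    exact ⟨z, hz, hzu, hzall⟩
  -- Fact L : a later neighbor of x is forced by x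
  have factL : ∀ x ∈ Q, ∀ y ∈ Q, G.Adj x y → t x < t y →
      ∀ w, G.Adj x w → w ≠ y → FLe G R (t y - 1) w := by
    intro x hx y hy hxy hlt' w hw hwy
    obtain ⟨z, hz, hzy, hzall⟩ := hforcer y hy
    have hfx : FLe G R (t y - 1) x := (htspec x).mono (by omega)
    have hnoty : ¬ FLe G R (t y - 1) y := hlt y _ (by have := htpos y hy; omega)
    have hzv : z ≠ v := by
      rintro rfl
      exact hnoty (INV1 (t y - 1) ⟨x, hx, hfx⟩ y hzy hy)
    have hzQ : z ∈ Q := hclos y hy z hzy.symm hzv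
    have hzx : z = x :=
      INV2 (t y - 1) z hzQ x hx hz hfx ⟨y, hy, hzy, hnoty⟩ ⟨y, hy, hxy, hnoty⟩
    subst hzx
    exact hzall w hw hwy
  -- injectivity of t on Q
  have tinj : ∀ x ∈ Q, ∀ x' ∈ Q, t x = t x' → x = x' := by
    intro x hx x' hx' hte
    by_contra hne
    obtain ⟨z, hz, hzx, hzall⟩ := hforcer x hx
    obtain ⟨z', hz', hz'x', hz'all⟩ := hforcer x' hx'
    rw [← hte] at hz' hz'all
    have hnx : ¬ FLe G R (t x - 1) x := hlt x _ (by have := htpos x hx; omega)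
    have hnx' : ¬ FLe G R (t x - 1) x' := by
      rw [hte]; exact hlt x' _ (by have := htpos x' hx'; omega)
    by_cases hzv : z = v <;> by_cases hz'v : z' = v
    · subst hzv; subst hz'v
      exact hnx' (hzall x' hz'x' (Ne.symm hne))
    · have hz'Q : z' ∈ Q := hclos x' hx' z' hz'x'.symm hz'v
      subst hzv
      exact hnx (INV1 (t x - 1) ⟨z', hz'Q, hz'⟩ x hzx hx)
    · have hzQ : z ∈ Q := hclos x hx z hzx.symm hzv
      subst hz'v
      exact hnx' (INV1 (t x - 1) ⟨z, hzQ, hz⟩ x' hz'x' hx')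
    · have hzQ : z ∈ Q := hclos x hx z hzx.symm hzv
      have hz'Q : z' ∈ Q := hclos x' hx' z' hz'x'.symm hz'v
      have hzz : z = z' :=
        INV2 (t x - 1) z hzQ z' hz'Q hz hz' ⟨x, hx, hzx, hnx⟩ ⟨x', hx', hz'x', hnx'⟩
      subst hzz
      exact hnx' (hzall x' hz'x' (Ne.symm hne))
  -- at most one earlier neighbor
  have earlier : ∀ x ∈ Q, ∀ w ∈ Q, ∀ w' ∈ Q, G.Adj x w → G.Adj x w' →
      t w < t x → t w' < t x → w = w' := by
    intro x hx w hw w' hw' hxw hxw' h1 h2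
    have hnx : ¬ FLe G R (max (t w) (t w')) x := hlt x _ (by omega)
    exact INV2 (max (t w) (t w')) w hw w' hw'
      ((htspec w).mono (le_max_left _ _)) ((htspec w').mono (le_max_right _ _))
      ⟨x, hx, hxw.symm, hnx⟩ ⟨x, hx, hxw'.symm, hnx⟩
  -- at most one later neighbor
  have later : ∀ x ∈ Q, ∀ y ∈ Q, ∀ y' ∈ Q, G.Adj x y → G.Adj x y' →
      t x < t y → t x < t y' → y = y' := by
    intro x hx y hy y' hy' hxy hxy' h1 h2
    by_contra hne
    have ha := htmin y' _ (factL x hx y hy hxy h1 y' hxy' (Ne.symm hne))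
    have hb := htmin y _ (factL x hx y' hy' hxy' h2 y hxy hne)
    omega
  -- degree bound 2
  have hdeg2 : ∀ x ∈ Q, (G.neighborSet x ∩ Q).ncard ≤ 2 := by
    intro x hx
    set E : Set V := {w | w ∈ G.neighborSet x ∩ Q ∧ t w < t x} with hE
    set L : Set V := {w | w ∈ G.neighborSet x ∩ Q ∧ t x < t w} with hL
    have hsub : G.neighborSet x ∩ Q ⊆ E ∪ L := by
      intro w hw
      have hne : t w ≠ t x := fun h => (hw.1.ne' : w ≠ x) (tinj w hw.2 x hx h)
      rcases lt_or_gt_of_ne hne with h | h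
      · exact Or.inl ⟨hw, h⟩
      · exact Or.inr ⟨hw, h⟩
    have hEcard : E.ncard ≤ 1 := by
      rw [Set.ncard_le_one (Set.toFinite E)]
      intro a ha b hb
      exact earlier x hx a ha.1.2 b hb.1.2 ha.1.1 hb.1.1 ha.2 hb.2
    have hLcard : L.ncard ≤ 1 := by
      rw [Set.ncard_le_one (Set.toFinite L)]
      intro a ha b hb
      exact later x hx a ha.1.2 b hb.1.2 ha.1.1 hb.1.1 ha.2 hb.2
    calc (G.neighborSet x ∩ Q).ncard ≤ (E ∪ L).ncard :=
          Set.ncard_le_ncard hsub (Set.toFinite _)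
      _ ≤ E.ncard + L.ncard := Set.ncard_union_le _ _
      _ ≤ 2 := by omega
  -- the base vertex
  obtain ⟨b, hbQ, hbmin⟩ := Set.exists_min_image Q t (Set.toFinite Q) hQne
  have hbadj : G.Adj v b := by
    obtain ⟨z, hz, hzb, hzall⟩ := hforcer b hbQ
    have hzv : z = v := by
      by_contra hne
      have hzQ : z ∈ Q := hclos b hbQ z hzb.symm hne
      have := htmin z _ hz
      have := hbmin z hzQ
      have := htpos b hbQ
      omega
    exact hzv ▸ hzb
  have hdeg1 : (G.neighborSet b ∩ Q).ncard ≤ 1 := by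
    rw [Set.ncard_le_one (Set.toFinite _)]
    intro a ha c hc
    have hta : t b < t a := by
      rcases lt_or_eq_of_le (hbmin a ha.2) with h | h
      · exact h
      · exact absurd (tinj b hbQ a ha.2 h) (ha.1.ne' : a ≠ b).symm
    have htc : t b < t c := by
      rcases lt_or_eq_of_le (hbmin c hc.2) with h | h
      · exact h
      · exact absurd (tinj b hbQ c hc.2 h) (hc.1.ne' : c ≠ b).symm
    exact later b hbQ a ha.2 c hc.2 ha.1 hc.1 hta htc
  exact ⟨⟨hQne, hQdisj, hQconn, hQclos⟩, ⟨hQne, hQconn, hdeg2, b, hbQ, hdeg1⟩,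
    b, hbQ, hbadj, hdeg1⟩

theorem walk_in_comp {V : Type} (G : SimpleGraph V) {v : V} {P R : Set V}
    (hP : G.IsCompOfDel {v} P) (hvR : v ∉ R) :
    ∀ (x y : ↥R) (w : (G.induce R).Walk x y), (x : V) ∈ P → (y : V) ∈ P := by
  intro x y w
  induction w with
  | nil => exact id
  | @cons x z y h p ih =>
      intro hx
      apply ih
      have hzv : (z : V) ∉ ({v} : Set V) := by
        intro hmem
        rw [Set.mem_singleton_iff] at hmem
        exact hvR (hmem ▸ z.2)
      exact hP.2.2.2 x.1 hx z.1 h hzv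

end ZFAux

/-- A cut vertex `v` with exactly two components in `G − v` and no pendant path attached
belongs to every connected forcing set. -/
theorem stmt6 {V : Type} [Fintype V] (G : SimpleGraph V) (hG : G.Connected) (v : V)
    (P₁ P₂ : Set V) (h1 : G.IsCompOfDel {v} P₁) (h2 : G.IsCompOfDel {v} P₂)
    (hd : Disjoint P₁ P₂) (hcover : P₁ ∪ P₂ = {v}ᶜ)
    (hnp : ∀ P : Set V, ¬ G.IsPendantPath v P) :
    ∀ R : Set V, G.IsConnectedZFS R → v ∈ R := by
  intro R hR
  obtain ⟨hZ, hRconn⟩ := hR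
  by_contra hvR
  obtain ⟨⟨a, haR⟩⟩ := hRconn.nonempty
  have haP : a ∈ P₁ ∪ P₂ := by
    rw [hcover]
    intro h
    rw [Set.mem_singleton_iff] at h
    exact hvR (h ▸ haR)
  have habsorb : ∀ (P : Set V), G.IsCompOfDel {v} P → a ∈ P → ∀ u ∈ R, u ∈ P := by
    intro P hP haP' u huR
    obtain ⟨w⟩ := hRconn.preconnected ⟨a, haR⟩ ⟨u, huR⟩
    exact ZFAux.walk_in_comp G hP hvR _ _ w haP'
  rcases haP with haP1 | haP2
  · refine hnp P₂ (ZFAux.key G v P₂ h2 R hZ ?_)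
    intro u hu huR
    exact Set.disjoint_left.mp hd (habsorb P₁ h1 haP1 u huR) hu
  · refine hnp P₁ (ZFAux.key G v P₁ h1 R hZ ?_)
    intro u hu huR
    exact Set.disjoint_left.mp hd hu (habsorb P₂ h2 haP2 u huR)
end

section
/- Let G be a connected graph and v a vertex such that G − v has at least three connected components. Then v belongs to every connected zero forcing set of G. -/
lemma forced_subset_closed {V : Type} (G : SimpleGraph V) (R A : Set V)
    (hRA : R ⊆ A)
    (hcl : ∀ u ∈ A, ∀ w, G.Adj u w → w ∉ A →
      ∃ w', G.Adj u w' ∧ w' ≠ w ∧ w' ∉ A) :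
    ∀ x, G.Forced R x → x ∈ A := by
  intro x hx
  induction hx with
  | init w hw => exact hRA hw
  | force u w hu huw hrest ihu ihrest =>
    by_contra hw
    obtain ⟨w', hadj, hne, hw'⟩ := hcl u ihu w huw hw
    exact hw' (ihrest w' hadj hne)

lemma comp_neighbor {V : Type} (G : SimpleGraph V) (hG : G.Connected) (v : V)
    (P : Set V) (hP : G.IsCompOfDel {v} P) :
    ∃ b ∈ P, G.Adj v b := by
  obtain ⟨⟨p, hp⟩, hdisj, _, hclo⟩ := hP
  have hvP : v ∉ P := fun h => (Set.disjoint_left.mp hdisj h) rfl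
  obtain ⟨w⟩ := hG.preconnected p v
  suffices h : ∀ (a c : V) (w : G.Walk a c), a ∈ P → c = v → ∃ b ∈ P, G.Adj v b from
    h p v w hp rfl
  intro a c w
  induction w with
  | nil => exact fun ha hc => absurd (hc ▸ ha) hvP
  | @cons x y _ hxy w ih =>
    intro ha hc
    by_cases hy : y ∈ P
    · exact ih hy hc
    · have hyv : y = v := by
        by_contra hne
        exact hy (hclo x ha y hxy (by simpa using hne))
      exact ⟨x, ha, hyv ▸ hxy.symm⟩

lemma walk_in_comp {V : Type} (G : SimpleGraph V) (v : V) (P R : Set V)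
    (hclo : ∀ u ∈ P, ∀ w, G.Adj u w → w ∉ ({v} : Set V) → w ∈ P)
    (hvR : v ∉ R) :
    ∀ (a b : R) (w : (G.induce R).Walk a b), (a : V) ∈ P → (b : V) ∈ P := by
  intro a b w
  induction w with
  | nil => exact id
  | @cons x y _ hxy w ih =>
    intro hx
    apply ih
    refine hclo x hx y hxy ?_
    intro h
    rw [Set.mem_singleton_iff] at h
    exact hvR (h ▸ y.2)

lemma meets_subset {V : Type} (G : SimpleGraph V) (v : V) (P R : Set V)
    (hP : G.IsCompOfDel {v} P) (hvR : v ∉ R)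
    (hconn : (G.induce R).Connected) (r : V) (hrR : r ∈ R) (hrP : r ∈ P) :
    R ⊆ P := by
  intro s hs
  obtain ⟨w⟩ := hconn.preconnected ⟨r, hrR⟩ ⟨s, hs⟩
  exact walk_in_comp G v P R hP.2.2.2 hvR ⟨r, hrR⟩ ⟨s, hs⟩ w hrP

/-- A cut vertex `v` such that `G − v` has at least three components belongs to every
connected forcing set. -/
theorem stmt7 {V : Type} [Fintype V] (G : SimpleGraph V) (hG : G.Connected) (v : V)
    (h3 : G.DelHasThreeComps v) :
    ∀ R : Set V, G.IsConnectedZFS R → v ∈ R := by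
  intro R hR
  by_contra hvR
  obtain ⟨P₁, P₂, P₃, h1, h2, h3', d12, d13, d23⟩ := h3
  -- find two components disjoint from R
  have key : ∀ Q Q' : Set V, G.IsCompOfDel {v} Q → G.IsCompOfDel {v} Q' →
      Disjoint Q Q' → Disjoint R Q → Disjoint R Q' → False := by
    intro Q Q' hQ hQ' dQQ' dRQ dRQ'
    obtain ⟨b, hbQ, hvb⟩ := comp_neighbor G hG v Q hQ
    obtain ⟨b', hbQ', hvb'⟩ := comp_neighbor G hG v Q' hQ'
    have hall : ∀ x, G.Forced R x → x ∈ (Q ∪ Q')ᶜ := by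
      refine forced_subset_closed G R (Q ∪ Q')ᶜ ?_ ?_
      · intro r hr h
        rcases h with h | h
        · exact Set.disjoint_left.mp dRQ hr h
        · exact Set.disjoint_left.mp dRQ' hr h
      · intro u hu w huw hw
        rw [Set.notMem_compl_iff] at hw
        rcases hw with hw | hw
        · -- w ∈ Q, so u = v (since u ∉ Q)
          have huv : u = v := by
            by_contra hne
            exact hu (Or.inl (hQ.2.2.2 w hw u huw.symm (by simpa using hne)))
          refine ⟨b', huv ▸ hvb', ?_, ?_⟩
          · intro h; exact Set.disjoint_left.mp dQQ' (h ▸ hw) hbQ'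
          · simp [hbQ']
        · have huv : u = v := by
            by_contra hne
            exact hu (Or.inr (hQ'.2.2.2 w hw u huw.symm (by simpa using hne)))
          refine ⟨b, huv ▸ hvb, ?_, ?_⟩
          · intro h; exact Set.disjoint_left.mp dQQ' hbQ (h ▸ hw)
          · simp [hbQ]
    obtain ⟨q, hq⟩ := hQ.1
    exact hall q (hR.1 q) (Or.inl hq)
  by_cases hm1 : (R ∩ P₁).Nonempty
  · obtain ⟨r, hrR, hrP⟩ := hm1
    have hsub := meets_subset G v P₁ R h1 hvR hR.2 r hrR hrP
    exact key P₂ P₃ h2 h3' d23 (d12.mono_left hsub) (d13.mono_left hsub)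
  · rw [Set.not_nonempty_iff_eq_empty, ← Set.disjoint_iff_inter_eq_empty] at hm1
    by_cases hm2 : (R ∩ P₂).Nonempty
    · obtain ⟨r, hrR, hrP⟩ := hm2
      have hsub := meets_subset G v P₂ R h2 hvR hR.2 r hrR hrP
      exact key P₁ P₃ h1 h3' d13 (d12.symm.mono_left hsub) (d23.mono_left hsub)
    · rw [Set.not_nonempty_iff_eq_empty, ← Set.disjoint_iff_inter_eq_empty] at hm2
      exact key P₁ P₂ h1 h2 d12 hm1 hm2
end

section
/- Let G be a connected graph that is not a path and B a block of G that is not a cut edge of a pendant path of G. Then every connected zero forcing set of G contains at least δ(G[B]) vertices of B, where δ denotes minimum degree. -/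
open Classical

namespace ZFaux

variable {V : Type} (G : SimpleGraph V)

/-- fuel-indexed zero forcing -/
def FN (R : Set V) : ℕ → V → Prop
  | 0, v => v ∈ R
  | (n+1), v => FN R n v ∨ ∃ u, FN R n u ∧ G.Adj u v ∧ ∀ w, G.Adj u w → w ≠ v → FN R n w

variable {G}

lemma FN.mono {R : Set V} {m n : ℕ} (h : m ≤ n) {v : V} (hv : FN G R m v) : FN G R n v := by
  induction n with
  | zero => rw [Nat.le_zero.mp h] at hv; exact hv
  | succ n ih =>
    rcases Nat.lt_or_ge m (n+1) with h' | h'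
    · exact Or.inl (ih (Nat.lt_succ_iff.mp h'))
    · have : m = n+1 := le_antisymm h h'
      subst this; exact hv

lemma forced_iff [Fintype V] {R : Set V} {v : V} : G.Forced R v ↔ ∃ n, FN G R n v := by
  constructor
  · intro h
    induction h with
    | init v hv => exact ⟨0, hv⟩
    | force u v hu huv hrest ihu ihrest =>
      obtain ⟨nu, hnu⟩ := ihu
      have hch : ∀ w : V, ∃ n, (G.Adj u w → w ≠ v → FN G R n w) := by
        intro w
        by_cases h1 : G.Adj u w
        · by_cases h2 : w ≠ v
          · obtain ⟨n, hn⟩ := ihrest w h1 h2; exact ⟨n, fun _ _ => hn⟩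
          · exact ⟨0, fun _ h => absurd h h2⟩
        · exact ⟨0, fun h => absurd h h1⟩
      choose f hf using hch
      refine ⟨max nu (Finset.univ.sup f) + 1, Or.inr ⟨u, FN.mono (le_max_left _ _) hnu, huv, ?_⟩⟩
      intro w hw hwv
      exact FN.mono (le_trans (Finset.le_sup (Finset.mem_univ w)) (le_max_right _ _)) (hf w hw hwv)
  · rintro ⟨n, hn⟩
    induction n generalizing v with
    | zero => exact SimpleGraph.Forced.init v hn
    | succ n ih =>
      rcases hn with h | ⟨u, hu, huv, hrest⟩
      · exact ih h
      · exact SimpleGraph.Forced.force u v (ih hu) huv (fun w h1 h2 => ih (hrest w h1 h2))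

/-- reachability within a set -/
def RI (G : SimpleGraph V) (S : Set V) (a b : V) : Prop :=
  Relation.ReflTransGen (fun x y => G.Adj x y ∧ x ∈ S ∧ y ∈ S) a b

lemma RI.mono {S S' : Set V} (hS : S ⊆ S') {a b : V} (h : RI G S a b) : RI G S' a b :=
  Relation.ReflTransGen.mono (r := fun x y => G.Adj x y ∧ x ∈ S ∧ y ∈ S)
    (p := fun x y => G.Adj x y ∧ x ∈ S' ∧ y ∈ S') (fun x y h' => ⟨h'.1, hS h'.2.1, hS h'.2.2⟩) a b h

lemma RI.symm {S : Set V} {a b : V} (h : RI G S a b) : RI G S b a :=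
  @Std.Symm.symm _ _ (@Relation.ReflTransGen.stdSymm _ _ ⟨fun _ _ h' => ⟨h'.1.symm, h'.2.2, h'.2.1⟩⟩) _ _ h

lemma RI.trans {S : Set V} {a b c : V} (h : RI G S a b) (h' : RI G S b c) : RI G S a c :=
  Relation.ReflTransGen.trans h h'

lemma induce_connected_iff {S : Set V} :
    (G.induce S).Connected ↔ S.Nonempty ∧ ∀ a ∈ S, ∀ b ∈ S, RI G S a b := by
  constructor
  · intro h
    have hne : S.Nonempty := by
      obtain ⟨⟨a, ha⟩⟩ := h.nonempty; exact ⟨a, ha⟩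
    refine ⟨hne, ?_⟩
    intro a ha b hb
    obtain ⟨w⟩ := h.preconnected ⟨a, ha⟩ ⟨b, hb⟩
    clear h
    have : ∀ (x y : S) (_ : (G.induce S).Walk x y), RI G S x.1 y.1 := by
      intro x y p
      induction p with
      | nil => exact Relation.ReflTransGen.refl
      | @cons x' y' z' hadj p ih =>
        have h1 : G.Adj x'.1 y'.1 := hadj
        exact Relation.ReflTransGen.head ⟨h1, x'.2, y'.2⟩ ih
    exact this ⟨a, ha⟩ ⟨b, hb⟩ w
  · rintro ⟨hne, h⟩
    rw [SimpleGraph.connected_iff]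
    obtain ⟨a₀, ha₀⟩ := hne
    refine ⟨?_, ⟨⟨a₀, ha₀⟩⟩⟩
    rintro ⟨a, ha⟩ ⟨b, hb⟩
    have key : ∀ c, RI G S a c → ∀ (hc : c ∈ S), (G.induce S).Reachable ⟨a, ha⟩ ⟨c, hc⟩ := by
      intro c hri
      induction hri with
      | refl => intro _; rfl
      | @tail b' c' hab hbc ih =>
        intro hc
        have hb' : b' ∈ S := hbc.2.1
        have hadj : (G.induce S).Adj ⟨b', hb'⟩ ⟨c', hc⟩ := hbc.1
        exact (ih hb').trans hadj.reachable
    exact key b (h a ha b hb) hb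

lemma chain_reach_head {S : Set V} : ∀ (L : List V) (hne : L ≠ []),
    L.Chain' G.Adj → (∀ a ∈ L, a ∈ S) → ∀ b ∈ L, RI G S (L.head hne) b := by
  intro L
  induction L with
  | nil => simp
  | cons h t ih =>
    intro _ hch hmem b hb
    rcases List.mem_cons.mp hb with rfl | hb'
    · exact Relation.ReflTransGen.refl
    · have ht : t ≠ [] := List.ne_nil_of_mem hb'
      obtain ⟨c, t', rfl⟩ : ∃ c t', t = c :: t' := by
        cases t with
        | nil => exact absurd rfl ht
        | cons c t' => exact ⟨c, t', rfl⟩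
      have hch' := List.isChain_cons_cons.mp hch
      have step : RI G S h c :=
        Relation.ReflTransGen.single ⟨hch'.1, hmem h (by simp), hmem c (by simp)⟩
      exact step.trans (ih (by simp) hch'.2 (fun a ha => hmem a (List.mem_cons_of_mem _ ha)) b hb')

lemma chain_reach {S : Set V} {L : List V} (hch : L.Chain' G.Adj) (hmem : ∀ a ∈ L, a ∈ S)
    {a b : V} (ha : a ∈ L) (hb : b ∈ L) : RI G S a b := by
  have hne : L ≠ [] := List.ne_nil_of_mem ha
  exact (chain_reach_head L hne hch hmem a ha).symm.trans (chain_reach_head L hne hch hmem b hb)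

end ZFaux

namespace ZFaux

variable {V : Type} {G : SimpleGraph V}

lemma pair_biconn {v w : V} (hadj : G.Adj v w) : G.IsBiconnectedSet {v, w} := by
  constructor
  · rw [induce_connected_iff]
    refine ⟨⟨v, by simp⟩, ?_⟩
    have hvw : RI G {v, w} v w :=
      Relation.ReflTransGen.single ⟨hadj, by simp, by simp⟩
    rintro a (rfl | rfl) b (rfl | rfl)
    · exact Relation.ReflTransGen.refl
    · exact hvw
    · exact hvw.symm
    · exact Relation.ReflTransGen.refl
  · intro z hz hne
    rw [induce_connected_iff]
    refine ⟨hne, ?_⟩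
    rintro a ⟨(rfl | rfl), ha⟩ b ⟨(rfl | rfl), hb⟩
    · exact Relation.ReflTransGen.refl
    · rcases hz with rfl | rfl
      · exact absurd rfl ha
      · exact absurd rfl hb
    · rcases hz with rfl | rfl
      · exact absurd rfl hb
      · exact absurd rfl ha
    · exact Relation.ReflTransGen.refl

lemma block_pair (hG : G.Connected) (hV : ∃ a b : V, a ≠ b) {B : Set V} (hB : G.IsBlock B) :
    ∃ a ∈ B, ∃ b ∈ B, a ≠ b := by
  obtain ⟨v, hv⟩ : B.Nonempty := (induce_connected_iff.mp hB.1.1).1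
  by_contra h
  push_neg at h
  have hBv : ∀ x ∈ B, x = v := fun x hx => h x hx v hv
  obtain ⟨u, hu⟩ : ∃ u : V, u ≠ v := by
    obtain ⟨a, b, hab⟩ := hV
    rcases eq_or_ne a v with rfl | h'
    · exact ⟨b, hab.symm⟩
    · exact ⟨a, h'⟩
  obtain ⟨w, hw⟩ : ∃ w, G.Adj v w := by
    obtain ⟨p⟩ := hG.preconnected v u
    cases p with
    | nil => exact absurd rfl hu.symm
    | cons h' _ => exact ⟨_, h'⟩
  have hBC := pair_biconn hw
  have heq := hB.2 {v, w} (fun x hx => by rw [hBv x hx]; simp) hBC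
  have hwB : w ∈ B := heq ▸ (by simp : w ∈ ({v, w} : Set V))
  have := hw
  rw [hBv w hwB] at this
  exact G.loopless.irrefl v this

variable (G) in
/-- adjacency outside `B` -/
def OutRel (B : Set V) : V → V → Prop := fun a b => G.Adj a b ∧ a ∉ B ∧ b ∉ B

variable (G) in
def outGraph (B : Set V) : SimpleGraph V where
  Adj a b := G.Adj a b ∧ a ∉ B ∧ b ∉ B
  symm := ⟨fun _ _ h => ⟨h.1.symm, h.2.2, h.2.1⟩⟩
  loopless := ⟨fun a h => G.loopless.irrefl a h.1⟩

lemma rtg_notB {B : Set V} {a b : V} (ha : a ∉ B)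
    (h : Relation.ReflTransGen (OutRel G B) a b) : b ∉ B := by
  induction h with
  | refl => exact ha
  | tail _ hstep _ => exact hstep.2.2

lemma rtg_symm {B : Set V} {a b : V} (h : Relation.ReflTransGen (OutRel G B) a b) :
    Relation.ReflTransGen (OutRel G B) b a :=
  @Std.Symm.symm _ _ (@Relation.ReflTransGen.stdSymm _ _ ⟨fun _ _ h' => ⟨h'.1.symm, h'.2.2, h'.2.1⟩⟩) _ _ h

lemma chain_out_notB {B : Set V} : ∀ (L : List V), L.Chain' (OutRel G B) →
    (∀ h : L ≠ [], L.head h ∉ B) → ∀ a ∈ L, a ∉ B := by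
  intro L
  induction L with
  | nil => simp
  | cons h t ih =>
    intro hch hhead a ha
    rcases List.mem_cons.mp ha with rfl | ha'
    · exact hhead (by simp)
    · cases t with
      | nil => simp at ha'
      | cons c t' =>
        have hch' := List.isChain_cons_cons.mp hch
        exact ih hch'.2 (fun _ => hch'.1.2.2) a ha'

lemma nodup_split {l₁ : List V} {a : V} {l₂ : List V} (h : (l₁ ++ a :: l₂).Nodup) :
    a ∉ l₁ ∧ a ∉ l₂ ∧ ∀ y ∈ l₁, y ∉ l₂ := by
  rw [List.nodup_append] at h
  obtain ⟨h1, h2, h3⟩ := h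
  rw [List.nodup_cons] at h2
  exact ⟨fun ha => h3 _ ha _ (by simp) rfl, h2.1, fun y hy hy2 => h3 _ hy _ (by simp [hy2]) rfl⟩

/-- Unique attachment: two edges from the same component of `G - B` into the block `B`
must land on the same vertex of `B`. -/
lemma attach_unique {B : Set V} (hB : G.IsBlock B)
    {c₁ c₂ w₁ w₂ : V} (hc₁ : c₁ ∉ B) (h12 : Relation.ReflTransGen (OutRel G B) c₁ c₂)
    (hw₁ : w₁ ∈ B) (hw₂ : w₂ ∈ B) (a₁ : G.Adj c₁ w₁) (a₂ : G.Adj c₂ w₂) : w₁ = w₂ := by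
  by_contra hne
  have hreach : (outGraph G B).Reachable c₁ c₂ := by
    rw [SimpleGraph.reachable_iff_reflTransGen]
    exact h12
  obtain ⟨q⟩ := hreach
  set p := q.toPath with hp
  set L : List V := (p : (outGraph G B).Walk c₁ c₂).support with hL
  have hLnd : L.Nodup := p.2.support_nodup
  have hLne : L ≠ [] := SimpleGraph.Walk.support_ne_nil _
  have hLchO : L.Chain' (OutRel G B) := SimpleGraph.Walk.isChain_adj_support (p : (outGraph G B).Walk c₁ c₂)
  have hLch : L.Chain' G.Adj := hLchO.imp (fun _ _ h => h.1)
  have hLhead : L.head hLne = c₁ := SimpleGraph.Walk.head_support _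
  have hLlast : L.getLast hLne = c₂ := SimpleGraph.Walk.getLast_support _
  have hLB : ∀ a ∈ L, a ∉ B := chain_out_notB L hLchO (fun _ => hLhead ▸ hc₁)
  have hc₁L : c₁ ∈ L := hLhead ▸ List.head_mem hLne
  have hc₂L : c₂ ∈ L := hLlast ▸ List.getLast_mem hLne
  have hLheadq : L.head? = some c₁ := by rw [List.head?_eq_head hLne, hLhead]
  have hLlastq : L.getLast? = some c₂ := by rw [List.getLast?_eq_getLast hLne, hLlast]
  set B' : Set V := B ∪ {a | a ∈ L} with hB'
  have hBB' : B ⊆ B' := Set.subset_union_left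
  have hw₁B' : w₁ ∈ B' := hBB' hw₁
  have hBconn := (induce_connected_iff.mp hB.1.1).2
  -- B' is biconnected
  have hbic : G.IsBiconnectedSet B' := by
    constructor
    · rw [induce_connected_iff]
      refine ⟨⟨w₁, hw₁B'⟩, ?_⟩
      have anchor : ∀ a ∈ B', RI G B' a w₁ := by
        rintro a (haB | haL)
        · exact (hBconn a haB w₁ hw₁).mono hBB'
        · have h1 : RI G B' a c₁ := chain_reach hLch (fun y hy => Or.inr hy) haL hc₁L
          exact h1.trans (Relation.ReflTransGen.single ⟨a₁, Or.inr hc₁L, hw₁B'⟩)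
      intro a ha b hb
      exact (anchor a ha).trans (anchor b hb).symm
    · intro z hz hzne
      rw [induce_connected_iff]
      refine ⟨hzne, ?_⟩
      by_cases hzL : z ∈ L
      · -- z is an interior vertex of the ear
        have hzB : z ∉ B := hLB z hzL
        obtain ⟨l₁, l₂, hsplit⟩ := List.append_of_mem hzL
        have hnd : (l₁ ++ z :: l₂).Nodup := hsplit ▸ hLnd
        obtain ⟨hzl₁, hzl₂, _⟩ := nodup_split hnd
        have hBsub : B ⊆ B' \ {z} := fun y hy =>
          ⟨hBB' hy, fun h => hzB (by rwa [Set.mem_singleton_iff.mp h] at hy)⟩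
        have hchsplit := List.isChain_append.mp (hsplit ▸ hLch)
        have anchor : ∀ a ∈ B' \ {z}, RI G (B' \ {z}) a w₁ := by
          rintro a ⟨(haB | haL), haz⟩
          · exact (hBconn a haB w₁ hw₁).mono hBsub
          · have haz' : a ≠ z := by simpa using haz
            have hal : a ∈ l₁ ∨ a ∈ l₂ := by
              rw [hsplit] at haL
              rcases List.mem_append.mp haL with h | h
              · exact Or.inl h
              · rcases List.mem_cons.mp h with rfl | h'
                · exact absurd rfl haz'
                · exact Or.inr h'
            rcases hal with hal | hal
            · -- prefix: reaches c₁ then w₁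
              cases l₁ with
              | nil => simp at hal
              | cons u t =>
                have hu : u = c₁ := by
                  have h0 := hLheadq
                  rw [hsplit] at h0
                  simpa using h0
                have hmemc₁ : c₁ ∈ u :: t := by simp [← hu]
                have hsubL : ∀ y ∈ (u :: t), y ∈ B' \ {z} := by
                  intro y hy
                  refine ⟨Or.inr ?_, fun hyz => hzl₁ ?_⟩
                  · rw [hsplit]; exact List.mem_append.mpr (Or.inl hy)
                  · rwa [← Set.mem_singleton_iff.mp hyz]
                have h1 : RI G (B' \ {z}) a c₁ :=
                  chain_reach hchsplit.1 hsubL hal hmemc₁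
                exact h1.trans
                  (Relation.ReflTransGen.single ⟨a₁, hsubL _ hmemc₁, hBsub hw₁⟩)
            · -- suffix: reaches c₂ then w₂ then w₁ inside B
              have hl₂ne : l₂ ≠ [] := List.ne_nil_of_mem hal
              have hc₂l₂ : c₂ ∈ l₂ := by
                have h0 := hLlastq
                rw [hsplit, List.getLast?_append,
                  List.getLast?_eq_getLast (l := z :: l₂) (by simp),
                  List.getLast_cons hl₂ne] at h0
                have h1 : l₂.getLast hl₂ne = c₂ := by simpa using h0
                exact h1 ▸ List.getLast_mem hl₂ne
              have hchl₂ : l₂.Chain' G.Adj := (List.isChain_cons.mp hchsplit.2.1).2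
              have hsubL : ∀ y ∈ l₂, y ∈ B' \ {z} := by
                intro y hy
                refine ⟨Or.inr ?_, fun hyz => hzl₂ ?_⟩
                · rw [hsplit]
                  exact List.mem_append.mpr (Or.inr (List.mem_cons_of_mem _ hy))
                · rwa [← Set.mem_singleton_iff.mp hyz]
              have h1 : RI G (B' \ {z}) a c₂ := chain_reach hchl₂ hsubL hal hc₂l₂
              have h2 : RI G (B' \ {z}) c₂ w₂ :=
                Relation.ReflTransGen.single ⟨a₂, hsubL _ hc₂l₂, hBsub hw₂⟩
              exact (h1.trans h2).trans ((hBconn w₂ hw₂ w₁ hw₁).mono hBsub)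
        intro a ha b hb
        exact (anchor a ha).trans (anchor b hb).symm
      · -- z ∈ B
        have hzB : z ∈ B := by
          rcases hz with h | h
          · exact h
          · exact absurd h hzL
        obtain ⟨wa, ca, hwaB, hwaz, hcaL, hadjca⟩ :
            ∃ wa ca, wa ∈ B ∧ wa ≠ z ∧ ca ∈ L ∧ G.Adj ca wa := by
          rcases eq_or_ne w₁ z with rfl | h
          · exact ⟨w₂, c₂, hw₂, fun h => hne h.symm, hc₂L, a₂⟩
          · exact ⟨w₁, c₁, hw₁, h, hc₁L, a₁⟩
        have hBsub : B \ {z} ⊆ B' \ {z} := fun y hy => ⟨hBB' hy.1, hy.2⟩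
        have hLsub : ∀ y ∈ L, y ∈ B' \ {z} := fun y hy =>
          ⟨Or.inr hy, fun h => hzL (by rwa [Set.mem_singleton_iff.mp h] at hy)⟩
        have hBconn' : ∀ a ∈ B, a ≠ z → RI G (B \ {z}) a wa := by
          intro a ha haz
          have hnonempty : (B \ {z}).Nonempty := ⟨wa, hwaB, by simpa using hwaz⟩
          have hcd := (induce_connected_iff.mp (hB.1.2 z hzB hnonempty)).2
          exact hcd a ⟨ha, by simpa using haz⟩ wa ⟨hwaB, by simpa using hwaz⟩
        have anchor : ∀ a ∈ B' \ {z}, RI G (B' \ {z}) a wa := by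
          rintro a ⟨(haB | haL), haz⟩
          · exact (hBconn' a haB (by simpa using haz)).mono hBsub
          · have h1 : RI G (B' \ {z}) a ca := chain_reach hLch hLsub haL hcaL
            exact h1.trans (Relation.ReflTransGen.single
              ⟨hadjca, hLsub _ hcaL, hBsub ⟨hwaB, by simpa using hwaz⟩⟩)
        intro a ha b hb
        exact (anchor a ha).trans (anchor b hb).symm
  have heq := hB.2 B' hBB' hbic
  exact hc₁ (heq ▸ (Or.inr hc₁L : c₁ ∈ B'))

end ZFaux

namespace ZFaux

variable {V : Type} {G : SimpleGraph V}

/-- The ordered structure carved out by zero forcing into a region `A` whose only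
exit vertex is `x`.  The list is ordered newest-first. -/
structure Spine (G : SimpleGraph V) (A : Set V) (x : V) (L : List V) : Prop where
  ne : L ≠ []
  nodup : L.Nodup
  mem : ∀ a ∈ L, a ∈ A
  chain : L.Chain' G.Adj
  lastAdj : G.Adj x (L.getLast ne)
  xnbr : ∀ w, G.Adj x w → w ∈ A → w = L.getLast ne
  tailnbr : ∀ l₁ b a l₂, L = l₁ ++ b :: a :: l₂ → ∀ w, G.Adj a w → w ∈ l₂ ∨ w = x ∨ w = b

/-- Any neighbour of a non-head spine vertex lies in the spine or equals `x`. -/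
lemma spine_tail_mem {A : Set V} {x : V} {L : List V} (hSp : Spine G A x L)
    {h0 : V} {t0 : List V} (hL : L = h0 :: t0) {u : V} (hu : u ∈ t0) :
    ∀ w, G.Adj u w → w ∈ L ∨ w = x := by
  intro w hw
  obtain ⟨t₁, t₂, ht⟩ := List.append_of_mem hu
  obtain ⟨l₁', b, hb⟩ : ∃ l₁' b, h0 :: t₁ = l₁' ++ [b] := by
    rcases (h0 :: t₁).eq_nil_or_concat with h | ⟨l₁', b, h⟩
    · simp at h
    · exact ⟨l₁', b, by simpa using h⟩
  have hpat : L = l₁' ++ b :: u :: t₂ := by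
    rw [hL, ht, ← List.cons_append, hb]; simp
  rcases hSp.tailnbr l₁' b u t₂ hpat w hw with h | h | h
  · left; rw [hpat]; exact List.mem_append.mpr (Or.inr (by simp [h]))
  · right; exact h
  · left; rw [hpat]; subst h; exact List.mem_append.mpr (Or.inr (by simp))

lemma spine_invariant [Fintype V] {R A : Set V} {x : V} (hxA : x ∉ A)
    (hRA : ∀ a ∈ A, a ∉ R) (hN : ∀ a ∈ A, ∀ w, G.Adj a w → w ∉ A → w = x) (n : ℕ) :
    (∀ a ∈ A, ¬ FN G R n a) ∨
      ∃ L, Spine G A x L ∧ ∀ a ∈ A, (FN G R n a ↔ a ∈ L) := by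
  induction n with
  | zero => exact Or.inl (fun a ha hFN => hRA a ha hFN)
  | succ n ih =>
    by_cases hnew : ∃ v ∈ A, FN G R (n+1) v ∧ ¬ FN G R n v
    · obtain ⟨v, hvA, hv1, hv0⟩ := hnew
      have hstep : ∃ u, FN G R n u ∧ G.Adj u v ∧ ∀ w, G.Adj u w → w ≠ v → FN G R n w := by
        rcases hv1 with h | h
        · exact absurd h hv0
        · exact h
      obtain ⟨u, hu, huv, hrest⟩ := hstep
      have huAx : u ∈ A ∨ u = x := by
        by_cases h : u ∈ A
        · exact Or.inl h
        · exact Or.inr (hN v hvA u huv.symm h)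
      rcases ih with h0 | ⟨L, hSp, hLmem⟩
      · -- nothing in A was colored at time n, thus u = x
        have hux : u = x := by
          rcases huAx with h | h
          · exact absurd hu (h0 u h)
          · exact h
        rw [hux] at hu huv hrest
        refine Or.inr ⟨[v], ?_, ?_⟩
        · refine ⟨by simp, by simp, by simpa using hvA, List.isChain_singleton _, by simpa using huv, ?_, ?_⟩
          · intro w hw hwA
            by_contra hwv
            have hwv' : w ≠ v := by simpa using hwv
            exact h0 w hwA (hrest w hw hwv')
          · intro l₁ b a l₂ heq
            exfalso
            have := congrArg List.length heq
            simp at this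
            omega
        · intro a ha
          constructor
          · intro hFa
            rcases hFa with h | ⟨u', hu', hadj', hrest'⟩
            · exact absurd h (h0 a ha)
            · have hu'x : u' = x := by
                by_cases h : u' ∈ A
                · exact absurd hu' (h0 u' h)
                · exact hN a ha u' hadj'.symm h
              subst hu'x
              by_contra hav
              have hav' : a ≠ v := by simpa using hav
              exact hv0 (hrest' v huv (fun h => hav' h.symm))
          · intro h
            have : a = v := by simpa using h
            subst this
            exact hv1
      · -- a spine exists; u must be its head
        have hgl : L.getLast hSp.ne ∈ L := List.getLast_mem hSp.ne
        have huA : u ∈ A := by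
          rcases huAx with h | h
          · exact h
          · subst h
            exfalso
            have hveq := hSp.xnbr v huv hvA
            exact hv0 ((hLmem v hvA).mpr (hveq ▸ hgl))
        have huL : u ∈ L := (hLmem u huA).mp hu
        have hvL : v ∉ L := fun h => hv0 ((hLmem v hvA).mpr h)
        -- u is the head of L
        obtain ⟨t, hLt⟩ : ∃ t, L = u :: t := by
          cases hL' : L with
          | nil => exact absurd hL' hSp.ne
          | cons h0 t0 =>
            rcases List.mem_cons.mp (hL' ▸ huL) with rfl | hu'
            · exact ⟨t0, rfl⟩
            · exfalso
              rcases spine_tail_mem hSp hL' hu' v huv with h | h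
              · exact hvL h
              · exact hxA (h ▸ hvA)
        refine Or.inr ⟨v :: L, ?_, ?_⟩
        · refine ⟨by simp, List.nodup_cons.mpr ⟨hvL, hSp.nodup⟩, ?_, ?_, ?_, ?_, ?_⟩
          · intro a ha
            rcases List.mem_cons.mp ha with rfl | h
            · exact hvA
            · exact hSp.mem a h
          · rw [hLt]
            exact List.isChain_cons_cons.mpr ⟨huv.symm, hLt ▸ hSp.chain⟩
          · rw [List.getLast_cons hSp.ne]
            exact hSp.lastAdj
          · intro w hw hwA
            rw [List.getLast_cons hSp.ne]
            exact hSp.xnbr w hw hwA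
          · intro l₁ b a l₂ heq w hw
            cases l₁ with
            | nil =>
              simp only [List.nil_append] at heq
              rw [hLt] at heq
              injection heq with h1 h2
              injection h2 with h3 h4
              -- h1 : v = b, h3 : u = a, h4 : t = l₂
              have hw' : G.Adj u w := by rw [h3]; exact hw
              rcases eq_or_ne w v with rfl | hwb
              · exact Or.inr (Or.inr h1)
              · have hFw : FN G R n w := hrest w hw' hwb
                by_cases hwA : w ∈ A
                · have hwL : w ∈ L := (hLmem w hwA).mp hFw
                  rw [hLt] at hwL
                  rcases List.mem_cons.mp hwL with rfl | hwt
                  · exact absurd hw' (G.loopless.irrefl _)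
                  · exact Or.inl (h4 ▸ hwt)
                · exact Or.inr (Or.inl (hN u huA w hw' hwA))
            | cons v' l₁' =>
              rw [List.cons_append] at heq
              injection heq with h1 h2
              exact hSp.tailnbr l₁' b a l₂ h2 w hw
        · intro a ha
          constructor
          · intro hFa
            by_cases hFn : FN G R n a
            · exact List.mem_cons_of_mem _ ((hLmem a ha).mp hFn)
            · rcases hFa with h | ⟨u', hu', hadj', hrest'⟩
              · exact absurd h hFn
              · have hu'Ax : u' ∈ A ∨ u' = x := by
                  by_cases h : u' ∈ A
                  · exact Or.inl h
                  · exact Or.inr (hN a ha u' hadj'.symm h)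
                rcases hu'Ax with hu'A | rfl
                · have hu'L : u' ∈ L := (hLmem u' hu'A).mp hu'
                  rw [hLt] at hu'L
                  rcases List.mem_cons.mp hu'L with rfl | hu't
                  · -- u' = u is the head
                    rcases eq_or_ne a v with rfl | hav
                    · simp
                    · exact absurd (hrest' v huv (fun h => hav h.symm)) hv0
                  · -- u' is in the tail: all its nbrs are known
                    rcases spine_tail_mem hSp hLt hu't a hadj' with h | h
                    · exact absurd ((hLmem a ha).mpr h) hFn
                    · exact absurd (h ▸ ha) hxA
                · have := hSp.xnbr a hadj' ha
                  exact List.mem_cons_of_mem _ (this ▸ hgl)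
          · intro h
            rcases List.mem_cons.mp h with rfl | h'
            · exact hv1
            · exact FN.mono (Nat.le_succ n) ((hLmem a ha).mpr h')
    · push_neg at hnew
      rcases ih with h0 | ⟨L, hSp, hLmem⟩
      · exact Or.inl (fun a ha hFa => h0 a ha (hnew a ha hFa))
      · exact Or.inr ⟨L, hSp, fun a ha => ⟨fun h => (hLmem a ha).mp (hnew a ha h),
          fun h => FN.mono (Nat.le_succ n) ((hLmem a ha).mpr h)⟩⟩

lemma spine_exists [Fintype V] {R A : Set V} {x : V} (hxA : x ∉ A)
    (hRA : ∀ a ∈ A, a ∉ R) (hN : ∀ a ∈ A, ∀ w, G.Adj a w → w ∉ A → w = x)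
    (hA : A.Nonempty) (hall : ∀ a, G.Forced R a) :
    ∃ L, Spine G A x L ∧ ∀ a, a ∈ A ↔ a ∈ L := by
  have hex : ∀ a : V, ∃ n, FN G R n a := fun a => forced_iff.mp (hall a)
  have hFN : ∀ a : V, FN G R (Finset.univ.sup fun a : V => Nat.find (hex a)) a := fun a =>
    FN.mono (Finset.le_sup (Finset.mem_univ a)) (Nat.find_spec (hex a))
  rcases spine_invariant hxA hRA hN (Finset.univ.sup fun a : V => Nat.find (hex a)) with
    h0 | ⟨L, hSp, hm⟩
  · obtain ⟨a, ha⟩ := hA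
    exact absurd (hFN a) (h0 a ha)
  · exact ⟨L, hSp, fun a => ⟨fun ha => (hm a ha).mp (hFN a), fun haL => hSp.mem a haL⟩⟩

end ZFaux

namespace ZFaux

variable {V : Type} {G : SimpleGraph V}

/-- Degree structure: a neighbour in `A` of a spine vertex is its predecessor or successor. -/
lemma spine_deg {A : Set V} {x : V} {L : List V} (hSp : Spine G A x L)
    (hAL : ∀ a, a ∈ A ↔ a ∈ L) (hxA : x ∉ A) {l₁ : List V} {a : V} {l₂ : List V}
    (h : L = l₁ ++ a :: l₂) {w : V} (hw : G.Adj a w) (hwA : w ∈ A) :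
    (∃ h1 : l₁ ≠ [], w = l₁.getLast h1) ∨ (∃ b m, l₂ = b :: m ∧ w = b) := by
  have hnd : (l₁ ++ a :: l₂).Nodup := h ▸ hSp.nodup
  obtain ⟨hal₁, hal₂, hdisj⟩ := nodup_split hnd
  have hwL : w ∈ L := (hAL w).mp hwA
  rw [h] at hwL
  rcases List.mem_append.mp hwL with hw1 | hw1
  · -- w is older (to the left)
    left
    have hl₁ : l₁ ≠ [] := List.ne_nil_of_mem hw1
    obtain ⟨l₁', b, hb⟩ : ∃ l₁' b, l₁ = l₁' ++ [b] := by
      rcases l₁.eq_nil_or_concat with h' | ⟨l₁', b, h'⟩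
      · exact absurd h' hl₁
      · exact ⟨l₁', b, by simpa using h'⟩
    have hpat : L = l₁' ++ b :: a :: l₂ := by rw [h, hb]; simp
    refine ⟨hl₁, ?_⟩
    rcases hSp.tailnbr l₁' b a l₂ hpat w hw with h' | h' | h'
    · exact absurd (hdisj w hw1) (fun hh => hh h')
    · exact absurd (h' ▸ hwA) hxA
    · have h2 : l₁.getLast? = some b := by rw [hb]; simp
      have h3 : l₁.getLast? = some (l₁.getLast hl₁) := List.getLast?_eq_getLast hl₁
      rw [h', Option.some_injective _ (h3.symm.trans h2)]
  · rcases List.mem_cons.mp hw1 with rfl | hw2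
    · exact absurd hw (G.loopless.irrefl _)
    · -- w is newer (to the right): it must be the immediate successor
      right
      obtain ⟨m₁, m₂, hm⟩ := List.append_of_mem hw2
      rcases m₁.eq_nil_or_concat with rfl | ⟨m₁', c, hc⟩
      · exact ⟨w, m₂, by simpa using hm, rfl⟩
      · exfalso
        have hpat : L = (l₁ ++ a :: m₁') ++ c :: w :: m₂ := by
          rw [h, hm, hc]; simp
        have hnd2 : ((l₁ ++ a :: m₁') ++ c :: w :: m₂).Nodup := hpat ▸ hSp.nodup
        have haml : a ∈ l₁ ++ a :: m₁' := by simp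
        obtain ⟨_, _, hdisj2⟩ := nodup_split (l₁ := l₁ ++ a :: m₁') hnd2
        rcases hSp.tailnbr (l₁ ++ a :: m₁') c w m₂ hpat a hw.symm with h' | h' | h'
        · exact hdisj2 a haml (by simp [h'])
        · exact hxA (h' ▸ ((hAL a).mpr (by rw [h]; simp)))
        · -- a = c, but c ∈ m₁ ⊆ l₂ while a is not in l₂
          apply hal₂
          rw [hm, hc, h']
          simp
  
/-- The region `A` is a pendant path attached at `x`. -/
lemma spine_pendant {A : Set V} {x : V} {L : List V} (hSp : Spine G A x L)
    (hAL : ∀ a, a ∈ A ↔ a ∈ L) (hxA : x ∉ A)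
    (hN : ∀ a ∈ A, ∀ w, G.Adj a w → w ∉ A → w = x) :
    G.IsPendantPath x A := by
  have hAconn : (G.induce A).Connected := by
    rw [induce_connected_iff]
    refine ⟨⟨L.getLast hSp.ne, (hAL _).mpr (List.getLast_mem hSp.ne)⟩, ?_⟩
    intro a ha b hb
    exact chain_reach hSp.chain (fun y hy => (hAL y).mpr hy) ((hAL a).mp ha) ((hAL b).mp hb)
  have hdeg : ∀ v ∈ A, ∀ (l₁ : List V) (l₂ : List V), L = l₁ ++ v :: l₂ →
      (G.neighborSet v ∩ A).ncard ≤ 2 := by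
    intro v _ l₁ l₂ hsplit
    have hsub : G.neighborSet v ∩ A ⊆ {l₁.getLastD x, l₂.headD x} := by
      rintro w ⟨hw, hwA⟩
      rcases spine_deg hSp hAL hxA hsplit hw hwA with ⟨h1, rfl⟩ | ⟨b, m, rfl, rfl⟩
      · left
        rw [List.getLastD_eq_getLast?, List.getLast?_eq_getLast h1]
        rfl
      · right
        rfl
    calc (G.neighborSet v ∩ A).ncard ≤ ({l₁.getLastD x, l₂.headD x} : Set V).ncard :=
          Set.ncard_le_ncard hsub (Set.toFinite _)
      _ ≤ 2 := by
          apply le_trans (Set.ncard_insert_le _ _)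
          simp
  have hdeg1 : ∀ v ∈ A, ∀ (l₁ : List V), L = l₁ ++ [v] →
      (G.neighborSet v ∩ A).ncard ≤ 1 := by
    intro v _ l₁ hsplit
    have hsub : G.neighborSet v ∩ A ⊆ {l₁.getLastD x} := by
      rintro w ⟨hw, hwA⟩
      rcases spine_deg hSp hAL hxA hsplit hw hwA with ⟨h1, rfl⟩ | ⟨b, m, hbm, rfl⟩
      · rw [List.getLastD_eq_getLast?, List.getLast?_eq_getLast h1]
        rfl
      · simp at hbm
    calc (G.neighborSet v ∩ A).ncard ≤ ({l₁.getLastD x} : Set V).ncard :=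
          Set.ncard_le_ncard hsub (Set.toFinite _)
      _ ≤ 1 := by simp
  have hlastA : L.getLast hSp.ne ∈ A := (hAL _).mpr (List.getLast_mem hSp.ne)
  have hlastsplit : L = L.dropLast ++ [L.getLast hSp.ne] :=
    (List.dropLast_append_getLast hSp.ne).symm
  refine ⟨⟨⟨L.getLast hSp.ne, hlastA⟩, ?_, hAconn, ?_⟩, ⟨⟨_, hlastA⟩, hAconn, ?_, ?_⟩, ?_⟩
  · rw [Set.disjoint_singleton_right]
    exact hxA
  · intro u hu w hw hwx
    by_contra hwA
    exact hwx (by rw [hN u hu w hw hwA]; rfl)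
  · intro v hv
    obtain ⟨l₁, l₂, hsplit⟩ := List.append_of_mem ((hAL v).mp hv)
    exact hdeg v hv l₁ l₂ hsplit
  · -- an end of degree ≤ 1 : the head of L reversed... use getLast
    exact ⟨L.getLast hSp.ne, hlastA, hdeg1 _ hlastA _ hlastsplit⟩
  · exact ⟨L.getLast hSp.ne, hlastA, hSp.lastAdj, hdeg1 _ hlastA _ hlastsplit⟩

/-- first element of a list satisfying a membership in `B` -/
lemma first_mem {B : Set V} : ∀ (L : List V), (∃ a ∈ L, a ∈ B) →
    ∃ l₁ a l₂, L = l₁ ++ a :: l₂ ∧ a ∈ B ∧ ∀ b ∈ l₁, b ∉ B := by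
  intro L
  induction L with
  | nil => rintro ⟨a, ha, _⟩; simp at ha
  | cons h t ih =>
    intro hex
    by_cases hP : h ∈ B
    · exact ⟨[], h, t, rfl, hP, by simp⟩
    · have hex' : ∃ a ∈ t, a ∈ B := by
        obtain ⟨a, ha, hab⟩ := hex
        rcases List.mem_cons.mp ha with rfl | ha'
        · exact absurd hab hP
        · exact ⟨a, ha', hab⟩
      obtain ⟨l₁, a, l₂, heq, haB, hl₁⟩ := ih hex'
      refine ⟨h :: l₁, a, l₂, by rw [heq]; rfl, haB, ?_⟩
      intro b hb
      rcases List.mem_cons.mp hb with rfl | hb'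
      · exact hP
      · exact hl₁ b hb'

end ZFaux
/-- Every connected forcing set of a connected non-path graph `G` contains at least
`δ(G[B])` vertices of each block `B` which is not a cut edge of a pendant path. -/
theorem stmt9 {V : Type} [Fintype V] (G : SimpleGraph V) (hG : G.Connected)
    (hnpath : ¬ G.IsPathGraphOn Set.univ) (B : Set V) (hB : G.IsBlock B)
    (hnce : ¬ ∃ (v : V) (P : Set V), G.IsPendantPath v P ∧ B ⊆ P ∪ {v} ∧ B.ncard = 2) :
    ∀ R : Set V, G.IsConnectedZFS R → G.minDegOn B ≤ (R ∩ B).ncard := by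
  classical
  intro R hR
  obtain ⟨hZFS, hRconn⟩ := hR
  open ZFaux in
  -- `V` has at least two vertices
  have hV : ∃ a b : V, a ≠ b := by
    by_contra h
    push_neg at h
    apply hnpath
    obtain ⟨v⟩ := hG.nonempty
    have hdeg : ∀ w : V, G.neighborSet w ∩ Set.univ = ∅ := by
      intro w
      ext u
      simp only [Set.mem_inter_iff, Set.mem_empty_iff_false, iff_false]
      rintro ⟨hadj, -⟩
      exact G.ne_of_adj hadj (h w u)
    refine ⟨⟨v, trivial⟩, ?_, ?_, ⟨v, trivial, ?_⟩⟩
    · exact (ZFaux.induce_connected_iff).mpr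
        ⟨⟨v, trivial⟩, fun a _ b _ => (h a b) ▸ Relation.ReflTransGen.refl⟩
    · intro w _
      rw [hdeg w]
      simp
    · rw [hdeg v]
      simp
  obtain ⟨b₁, hb₁, b₂, hb₂, hb12⟩ := ZFaux.block_pair hG hV hB
  have hBne : B.Nonempty := ⟨b₁, hb₁⟩
  have hRIconn := (ZFaux.induce_connected_iff.mp hRconn).2
  have hex : ∀ w : V, ∃ n, ZFaux.FN G R n w := fun w => ZFaux.forced_iff.mp (hZFS w)
  rcases Set.eq_empty_or_nonempty (R ∩ B) with hT | hT
  · ------------------------------------------------------------------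
    -- Case B : the forcing set avoids the block entirely; contradiction
    ------------------------------------------------------------------
    exfalso
    have hRB : ∀ r ∈ R, r ∉ B := fun r hr hrB =>
      (Set.eq_empty_iff_forall_notMem.mp hT r) ⟨hr, hrB⟩
    obtain ⟨c₀, hc₀⟩ : R.Nonempty := (ZFaux.induce_connected_iff.mp hRconn).1
    have hc₀B : c₀ ∉ B := hRB c₀ hc₀
    -- the component of c₀ in G - B
    have hRC : ∀ r ∈ R, Relation.ReflTransGen (ZFaux.OutRel G B) c₀ r := by
      intro r hr
      exact Relation.ReflTransGen.mono (r := fun x y => G.Adj x y ∧ x ∈ R ∧ y ∈ R)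
        (p := ZFaux.OutRel G B)
        (fun a b h' => ⟨h'.1, hRB a h'.2.1, hRB b h'.2.2⟩) _ _ (hRIconn c₀ hc₀ r hr)
    -- the attachment vertex x
    obtain ⟨cst, hcst, x, hxB, hcx⟩ :
        ∃ c, Relation.ReflTransGen (ZFaux.OutRel G B) c₀ c ∧ ∃ xx ∈ B, G.Adj c xx := by
      have hreach : Relation.ReflTransGen G.Adj c₀ b₁ := by
        rw [← SimpleGraph.reachable_iff_reflTransGen]
        exact hG.preconnected c₀ b₁
      have key : ∀ y, Relation.ReflTransGen G.Adj c₀ y →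
          (Relation.ReflTransGen (ZFaux.OutRel G B) c₀ y ∧ y ∉ B) ∨
          (∃ c, Relation.ReflTransGen (ZFaux.OutRel G B) c₀ c ∧ ∃ xx ∈ B, G.Adj c xx) := by
        intro y hy
        induction hy with
        | refl => exact Or.inl ⟨Relation.ReflTransGen.refl, hc₀B⟩
        | @tail y' z' _ hstep ih =>
          rcases ih with ⟨h1, h2⟩ | h
          · by_cases hzB : z' ∈ B
            · exact Or.inr ⟨y', h1, z', hzB, hstep⟩
            · exact Or.inl ⟨h1.tail ⟨hstep, h2, hzB⟩, hzB⟩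
          · exact Or.inr h
      rcases key b₁ hreach with ⟨_, h2⟩ | h
      · exact absurd hb₁ h2
      · exact h
    -- uniqueness of the attachment
    have huniq : ∀ c y, Relation.ReflTransGen (ZFaux.OutRel G B) c₀ c → y ∈ B →
        G.Adj c y → y = x := by
      intro c y hc hy hadj
      have hcstB : cst ∉ B := ZFaux.rtg_notB hc₀B hcst
      exact (ZFaux.attach_unique hB hcstB ((ZFaux.rtg_symm hcst).trans hc)
        hxB hy hcx hadj).symm
    have hCB : ∀ w, Relation.ReflTransGen (ZFaux.OutRel G B) c₀ w → w ∉ B :=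
      fun w hw => ZFaux.rtg_notB hc₀B hw
    set A : Set V := {a | ¬ Relation.ReflTransGen (ZFaux.OutRel G B) c₀ a ∧ a ≠ x} with hA
    have hxA : x ∉ A := fun h => h.2 rfl
    have hBA : ∀ b' ∈ B, b' ≠ x → b' ∈ A := fun b' hb' hbx =>
      ⟨fun hC => hCB b' hC hb', hbx⟩
    have hAne : A.Nonempty := by
      rcases eq_or_ne b₁ x with rfl | h
      · exact ⟨b₂, hBA b₂ hb₂ (fun h' => hb12 h'.symm)⟩
      · exact ⟨b₁, hBA b₁ hb₁ h⟩
    have hRA : ∀ a ∈ A, a ∉ R := fun a ha haR => ha.1 (hRC a haR)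
    have hN : ∀ a ∈ A, ∀ w, G.Adj a w → w ∉ A → w = x := by
      intro a ha w hadj hwA
      by_contra hwx
      have hwC : Relation.ReflTransGen (ZFaux.OutRel G B) c₀ w := by
        by_contra h'
        exact hwA ⟨h', hwx⟩
      have haB : a ∈ B := by
        by_contra haB
        exact ha.1 (hwC.tail ⟨hadj.symm, hCB w hwC, haB⟩)
      exact ha.2 (huniq w a hwC haB hadj.symm)
    obtain ⟨L, hSp, hAL⟩ := ZFaux.spine_exists hxA hRA hN hAne hZFS
    have hpp : G.IsPendantPath x A := ZFaux.spine_pendant hSp hAL hxA hN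
    have hBsub : B ⊆ A ∪ {x} := by
      intro b' hb'
      rcases eq_or_ne b' x with rfl | h
      · exact Or.inr rfl
      · exact Or.inl (hBA b' hb' h)
    -- the newest vertex of B on the spine
    have hBex : ∃ a ∈ L, a ∈ B := by
      rcases eq_or_ne b₁ x with rfl | h
      · exact ⟨b₂, (hAL b₂).mp (hBA b₂ hb₂ (fun h' => hb12 h'.symm)), hb₂⟩
      · exact ⟨b₁, (hAL b₁).mp (hBA b₁ hb₁ h), hb₁⟩
    obtain ⟨l₁, aq, l₂, hLsplit, haqB, hl₁B⟩ := ZFaux.first_mem L hBex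
    have haqL : aq ∈ L := by rw [hLsplit]; simp
    have haqA : aq ∈ A := (hAL aq).mpr haqL
    have haqx : aq ≠ x := fun h => hxA (h ▸ haqA)
    have hndL : (l₁ ++ aq :: l₂).Nodup := hLsplit ▸ hSp.nodup
    obtain ⟨haql₁, haql₂, hdisj⟩ := ZFaux.nodup_split hndL
    cases hl₂ : l₂ with
    | nil =>
      -- B = {x, aq}, the excluded pendant-path cut edge
      have hBeq : B = {x, aq} := by
        apply Set.eq_of_subset_of_subset
        · intro b' hb'
          rcases hBsub hb' with hbA | hbx
          · have hbL : b' ∈ L := (hAL b').mp hbA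
            rw [hLsplit, hl₂] at hbL
            rcases List.mem_append.mp hbL with h' | h'
            · exact absurd hb' (hl₁B b' h')
            · right; simpa using h'
          · left; simpa using hbx
        · rintro b' (rfl | rfl)
          · exact hxB
          · exact haqB
      apply hnce
      refine ⟨x, A, hpp, ?_, ?_⟩
      · rw [hBeq]
        rintro y (rfl | rfl)
        · exact Or.inr rfl
        · exact Or.inl haqA
      · rw [hBeq, Set.ncard_pair (Ne.symm haqx)]
    | cons c m =>
      have hcl₂ : c ∈ l₂ := by rw [hl₂]; simp
      have haqlast : aq ≠ L.getLast hSp.ne := by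
        intro h
        have hq : (aq :: c :: m : List V).getLast (by simp) = aq := by
          have h1 : L.getLast? = some aq := by
            rw [List.getLast?_eq_getLast hSp.ne, ← h]
          rw [hLsplit, hl₂, List.getLast?_append,
            List.getLast?_eq_getLast (l := aq :: c :: m) (by simp)] at h1
          simpa using h1
        rw [List.getLast_cons (by simp : c :: m ≠ [])] at hq
        apply haql₂
        rw [hl₂]
        exact hq ▸ List.getLast_mem (by simp : c :: m ≠ [])
      have hxaq : ¬ G.Adj aq x := fun hadj => haqlast (hSp.xnbr aq hadj.symm haqA)
      have hnbrB : ∀ y, G.Adj aq y → y ∈ B → y = c := by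
        intro y hadj hyB
        have hyx : y ≠ x := fun hh => hxaq (hh ▸ hadj)
        have hyA : y ∈ A := hBA y hyB hyx
        rcases ZFaux.spine_deg hSp hAL hxA hLsplit hadj hyA with ⟨h1, rfl⟩ | ⟨c', m', hcm, rfl⟩
        · exact absurd hyB (hl₁B _ (List.getLast_mem h1))
        · rw [hl₂] at hcm
          injection hcm with h1 _
          exact h1.symm
      have hcL : c ∈ L := by rw [hLsplit, hl₂]; simp
      have hcA : c ∈ A := (hAL c).mpr hcL
      have hcx : c ≠ x := fun hh => hxA (hh ▸ hcA)
      have haqc : aq ≠ c := fun hh => haql₂ (hh ▸ hcl₂)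
      by_cases hcB : c ∈ B
      · have hne2 : (B \ {c}).Nonempty := ⟨aq, haqB, by simpa using haqc⟩
        have hconn := (ZFaux.induce_connected_iff.mp (hB.1.2 c hcB hne2)).2
        have hri := hconn aq ⟨haqB, by simpa using haqc⟩ x ⟨hxB, by simpa using hcx.symm⟩
        rcases hri.cases_head with heq | ⟨y, ⟨hadj, _, hy⟩, _⟩
        · exact haqx heq
        · exact (by simpa using hy.2 : y ≠ c) (hnbrB y hadj hy.1)
      · have hri := (ZFaux.induce_connected_iff.mp hB.1.1).2 aq haqB x hxB
        rcases hri.cases_head with heq | ⟨y, ⟨hadj, _, hy⟩, _⟩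
        · exact haqx heq
        · exact hcB ((hnbrB y hadj hy) ▸ hy)
  · ------------------------------------------------------------------
    -- Case A : counting
    ------------------------------------------------------------------
    by_cases hBR : ∀ b' ∈ B, b' ∈ R
    · have hRBeq : R ∩ B = B := by
        apply Set.eq_of_subset_of_subset Set.inter_subset_right
        exact fun b' hb' => ⟨hBR b' hb', hb'⟩
      rw [hRBeq]
      calc G.minDegOn B ≤ (G.neighborSet b₁ ∩ B).ncard := Nat.sInf_le ⟨b₁, hb₁, rfl⟩
        _ ≤ B.ncard := Set.ncard_le_ncard Set.inter_subset_right B.toFinite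
    · push_neg at hBR
      obtain ⟨v₀, hv₀B, hv₀R⟩ := hBR
      -- minimal fuel vertex of B \ R
      obtain ⟨v, hvB, hvR, hvmin⟩ : ∃ v, v ∈ B ∧ v ∉ R ∧
          ∀ w, w ∈ B → w ∉ R → Nat.find (hex v) ≤ Nat.find (hex w) := by
        have hne' : {n | ∃ w, (w ∈ B ∧ w ∉ R) ∧ Nat.find (hex w) = n}.Nonempty :=
          ⟨_, v₀, ⟨hv₀B, hv₀R⟩, rfl⟩
        obtain ⟨v, ⟨hvB, hvR⟩, hveq⟩ := Nat.sInf_mem hne'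
        refine ⟨v, hvB, hvR, fun w hwB hwR => ?_⟩
        rw [hveq]
        exact Nat.sInf_le ⟨w, ⟨hwB, hwR⟩, rfl⟩
      obtain ⟨m, hm⟩ : ∃ m, Nat.find (hex v) = m + 1 := by
        refine ⟨Nat.find (hex v) - 1, (Nat.succ_pred_eq_of_ne_zero ?_).symm⟩
        intro h
        apply hvR
        have := Nat.find_spec (hex v)
        rw [h] at this
        exact this
      obtain ⟨u, hu, huv, hrest⟩ :
          ∃ u, ZFaux.FN G R m u ∧ G.Adj u v ∧ ∀ w, G.Adj u w → w ≠ v → ZFaux.FN G R m w := by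
        have h1 := Nat.find_spec (hex v)
        rw [hm] at h1
        rcases h1 with h | h
        · exact absurd h (Nat.find_min (hex v) (by omega))
        · exact h
      have hBm : ∀ w ∈ B, ZFaux.FN G R m w → w ∈ R := by
        intro w hwB hw
        by_contra hwR
        have h1 : Nat.find (hex w) ≤ m := Nat.find_le hw
        have h2 := hvmin w hwB hwR
        omega
      by_cases huB : u ∈ B
      · -- counting argument
        have hsub : insert u ((G.neighborSet u ∩ B) \ {v}) ⊆ R ∩ B := by
          intro w hw
          rcases Set.mem_insert_iff.mp hw with rfl | ⟨⟨hadj, hwB⟩, hwv⟩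
          · exact ⟨hBm w huB hu, huB⟩
          · exact ⟨hBm w hwB (hrest w hadj (by simpa using hwv)), hwB⟩
        have hvmem : v ∈ G.neighborSet u ∩ B := ⟨huv, hvB⟩
        have huno : u ∉ (G.neighborSet u ∩ B) \ {v} := fun h => (G.loopless.irrefl u) h.1.1
        have h1 : (G.neighborSet u ∩ B).ncard ≤ (R ∩ B).ncard := by
          calc (G.neighborSet u ∩ B).ncard
              = ((G.neighborSet u ∩ B) \ {v}).ncard + 1 :=
                (Set.ncard_diff_singleton_add_one hvmem (Set.toFinite _)).symm
            _ = (insert u ((G.neighborSet u ∩ B) \ {v})).ncard :=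
                (Set.ncard_insert_of_notMem huno (Set.toFinite _)).symm
            _ ≤ (R ∩ B).ncard := Set.ncard_le_ncard hsub (Set.toFinite _)
        exact le_trans (Nat.sInf_le ⟨u, huB, rfl⟩) h1
      · -- forcing into the block from outside: impossible
        exfalso
        have huniq : ∀ c y, Relation.ReflTransGen (ZFaux.OutRel G B) u c → y ∈ B →
            G.Adj c y → y = v := by
          intro c y hc hy hadj
          exact (ZFaux.attach_unique hB huB hc hvB hy huv hadj).symm
        have claimE : ∀ n w, Relation.ReflTransGen (ZFaux.OutRel G B) u w →
            ZFaux.FN G R n w →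
            (∃ c ∈ R, Relation.ReflTransGen (ZFaux.OutRel G B) u c) ∨
            ∃ m', m' < n ∧ ZFaux.FN G R m' v := by
          intro n
          induction n with
          | zero => exact fun w hw hFw => Or.inl ⟨w, hFw, hw⟩
          | succ n ihn =>
            intro w hw hFw
            rcases hFw with h | ⟨u', hu', hadj, _⟩
            · rcases ihn w hw h with h' | ⟨m', hm', h'⟩
              · exact Or.inl h'
              · exact Or.inr ⟨m', by omega, h'⟩
            · by_cases hu'B : u' ∈ B
              · have hveq : u' = v := huniq w u' hw hu'B hadj.symm
                exact Or.inr ⟨n, by omega, hveq ▸ hu'⟩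
              · have hw' : Relation.ReflTransGen (ZFaux.OutRel G B) u u' :=
                  hw.tail ⟨hadj.symm, ZFaux.rtg_notB huB hw, hu'B⟩
                rcases ihn u' hw' hu' with h' | ⟨m', hm', h'⟩
                · exact Or.inl h'
                · exact Or.inr ⟨m', by omega, h'⟩
        rcases claimE m u Relation.ReflTransGen.refl hu with ⟨c, hcR, hc⟩ | ⟨m', hm', hv'⟩
        · -- the component meets R, hence v ∈ R: contradiction
          obtain ⟨b0, hb0R, hb0B⟩ := hT
          have hri : ZFaux.RI G R c b0 := hRIconn c hcR b0 hb0R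
          have key : ∀ y, ZFaux.RI G R c y →
              Relation.ReflTransGen (ZFaux.OutRel G B) u y ∨ v ∈ R := by
            intro y hy
            induction hy with
            | refl => exact Or.inl hc
            | @tail y' z' _ hstep ih =>
              rcases ih with h | h
              · by_cases hzB : z' ∈ B
                · have : z' = v := huniq y' z' h hzB hstep.1
                  exact Or.inr (this ▸ hstep.2.2)
                · exact Or.inl (h.tail ⟨hstep.1, ZFaux.rtg_notB huB h, hzB⟩)
              · exact Or.inr h
          rcases key b0 hri with h | h
          · exact (ZFaux.rtg_notB huB h) hb0B
          · exact hvR h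
        · exact Nat.find_min (hex v) (by omega) hv'
end

section
/- Let G = (V,E) be a graph with a zero forcing set S of size at most k, and let G' be the graph obtained from G by adding a universal vertex v* adjacent to all of V and two new leaves ℓ₁, ℓ₂ adjacent only to v*. Then S ∪ {v*, ℓ₁} is a connected zero forcing set of G' of size at most k + 2. -/
/-- The graph `G'` obtained from `G` by adding a universal vertex `v* = Sum.inr 0`
adjacent to all of `V`, and two leaves `ℓ₁ = Sum.inr 1`, `ℓ₂ = Sum.inr 2` adjacent
only to `v*`. -/
def augGraph {V : Type*} (G : SimpleGraph V) : SimpleGraph (V ⊕ Fin 3) :=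
  SimpleGraph.fromRel (fun a b =>
    match a, b with
    | Sum.inl u, Sum.inl w => G.Adj u w
    | Sum.inl _, Sum.inr i => i = 0
    | Sum.inr i, Sum.inl _ => i = 0
    | Sum.inr i, Sum.inr j => i = 0 ∨ j = 0)

/-- If `S` is a zero forcing set of `G` of size at most `k`, then `S ∪ {v*, ℓ₁}` is a
connected zero forcing set of `G'` of size at most `k + 2`. -/
theorem stmt12 {V : Type} [Fintype V] (G : SimpleGraph V) (k : ℕ)
    (S : Set V) (hS : G.IsZeroForcingSet S) (hk : S.ncard ≤ k) :
    (augGraph G).IsConnectedZFS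
        (Sum.inl '' S ∪ {Sum.inr 0, Sum.inr 1}) ∧
      (Sum.inl '' S ∪ {Sum.inr 0, Sum.inr 1} : Set (V ⊕ Fin 3)).ncard ≤ k + 2 := by
    classical
  set S' : Set (V ⊕ Fin 3) := Sum.inl '' S ∪ {Sum.inr 0, Sum.inr 1} with hS'
  have hub_mem : (Sum.inr 0 : V ⊕ Fin 3) ∈ S' := Or.inr (Or.inl rfl)
  have one_mem : (Sum.inr 1 : V ⊕ Fin 3) ∈ S' := Or.inr (Or.inr rfl)
  have adj_iff : ∀ a b : V ⊕ Fin 3, (augGraph G).Adj a b ↔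
      a ≠ b ∧ ((match a, b with
    | Sum.inl u, Sum.inl w => G.Adj u w
    | Sum.inl _, Sum.inr i => i = 0
    | Sum.inr i, Sum.inl _ => i = 0
    | Sum.inr i, Sum.inr j => i = 0 ∨ j = 0) ∨ (match b, a with
    | Sum.inl u, Sum.inl w => G.Adj u w
    | Sum.inl _, Sum.inr i => i = 0
    | Sum.inr i, Sum.inl _ => i = 0
    | Sum.inr i, Sum.inr j => i = 0 ∨ j = 0)) := by
    intro a b; exact SimpleGraph.fromRel_adj _ a b
  have adj_ll : ∀ u w : V, (augGraph G).Adj (Sum.inl u) (Sum.inl w) ↔ G.Adj u w := by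
    intro u w
    rw [adj_iff]
    constructor
    · rintro ⟨-, h | h⟩; exact h; exact h.symm
    · intro h; exact ⟨by simp [h.ne], Or.inl h⟩
  have adj_lr : ∀ (u : V) (i : Fin 3), (augGraph G).Adj (Sum.inl u) (Sum.inr i) ↔ i = 0 := by
    intro u i
    rw [adj_iff]
    constructor
    · rintro ⟨-, h | h⟩ <;> exact h
    · intro h; exact ⟨by simp, Or.inl h⟩
  have adj_rr : ∀ i j : Fin 3, (augGraph G).Adj (Sum.inr i) (Sum.inr j) ↔ i ≠ j ∧ (i = 0 ∨ j = 0) := by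
    intro i j
    rw [adj_iff]
    constructor
    · rintro ⟨hne, h | h⟩
      · exact ⟨by simpa using hne, h⟩
      · exact ⟨by simpa using hne, h.symm⟩
    · rintro ⟨hne, h⟩; exact ⟨by simpa using hne, Or.inl h⟩
  -- every vertex forced in G is forced (as inl) in G'
  have force_lift : ∀ v : V, G.Forced S v → (augGraph G).Forced S' (Sum.inl v) := by
    intro v hv
    induction hv with
    | init v hv => exact .init _ (Or.inl ⟨v, hv, rfl⟩)
    | force u v hu huv hrest ihu ihrest =>
      refine .force (Sum.inl u) (Sum.inl v) ihu ((adj_ll u v).2 huv) ?_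
      rintro (w | i) hw hne
      · exact ihrest w ((adj_ll u w).1 hw) (by simpa using hne)
      · have : i = 0 := (adj_lr u i).1 hw
        subst this; exact .init _ hub_mem
  have hforce : (augGraph G).IsZeroForcingSet S' := by
    rintro (v | i)
    · exact force_lift v (hS v)
    · fin_cases i
      · exact .init _ hub_mem
      · exact .init _ one_mem
      · refine .force (Sum.inr 0) (Sum.inr 2) (.init _ hub_mem)
          ((adj_rr 0 2).2 ⟨by decide, Or.inl rfl⟩) ?_
        rintro (w | j) hw hne
        · exact force_lift w (hS w)
        · have hj : (0 : Fin 3) ≠ j ∧ ((0 : Fin 3) = 0 ∨ j = 0) := (adj_rr 0 j).1 hw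
          have hne' : j ≠ 2 := fun h => hne (by rw [h])
          have : j = 1 := by
            apply Fin.ext
            have hlt := j.isLt
            have hv0 : (j : ℕ) ≠ 0 := fun h => hj.1 (Fin.ext h.symm)
            have hv2 : (j : ℕ) ≠ 2 := fun h => hne' (Fin.ext h)
            omega
          subst this; exact .init _ one_mem
  have hconn : ((augGraph G).induce S').Connected := by
    have key : ∀ a : ↥S', ((augGraph G).induce S').Reachable a ⟨Sum.inr 0, hub_mem⟩ := by
      rintro ⟨(v | i), hv⟩
      · refine SimpleGraph.Adj.reachable ?_
        show (augGraph G).Adj (Sum.inl v) (Sum.inr 0)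
        exact (adj_lr v 0).2 rfl
      · have : i = 0 ∨ i = 1 := by
          rcases hv with ⟨x, -, hx⟩ | h | h
          · exact absurd hx (by simp)
          · exact Or.inl (by simpa using h)
          · exact Or.inr (by simpa using h)
        rcases this with h | h <;> subst h
        · exact SimpleGraph.Reachable.refl _
        · refine SimpleGraph.Adj.reachable ?_
          show (augGraph G).Adj (Sum.inr 1) (Sum.inr 0)
          exact (adj_rr 1 0).2 ⟨by decide, Or.inr rfl⟩
    have : Nonempty ↥S' := ⟨⟨Sum.inr 0, hub_mem⟩⟩
    exact SimpleGraph.Connected.mk (fun a b => (key a).trans (key b).symm)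
  refine ⟨⟨hforce, hconn⟩, ?_⟩
  calc S'.ncard ≤ (Sum.inl '' S : Set (V ⊕ Fin 3)).ncard + ({Sum.inr 0, Sum.inr 1} : Set (V ⊕ Fin 3)).ncard :=
        Set.ncard_union_le _ _
    _ ≤ k + 2 := by
        have h1 : (Sum.inl '' S : Set (V ⊕ Fin 3)).ncard = S.ncard :=
          Set.ncard_image_of_injective _ Sum.inl_injective
        have h2 : ({Sum.inr 0, Sum.inr 1} : Set (V ⊕ Fin 3)).ncard ≤ 2 := by
          apply le_trans (Set.ncard_insert_le _ _)
          simp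
        omega
end
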